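/- arXiv:2308.07636 — 9 statements merged into one kernel-verified Lean document; each statement's English description precedes it below -/
import Mathlib

section
/- (Strong L_q duality, Theorem 2.1(1)) Assume n + 1 ≤ m, Ψ satisfies the discrete Haar condition, q ≥ 1, and η* > 0. Then sup_{w ∈ S} d_q(w) = (η*)^q. -/
open scoped BigOperators
open Set

lemma ciSup_attained {ι : Type*} [Finite ι] [Nonempty ι] (g : ι → ℝ) :
    ∃ i, (⨆ j, g j) = g i := by
  obtain ⟨i, hi⟩ := Finite.exists_max g
  exact ⟨i, le_antisymm (ciSup_le hi) (le_ciSup (Set.finite_range g).bddAbove i)⟩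

lemma rpow_ciSup_fin {ι : Type*} [Finite ι] [Nonempty ι] (g : ι → ℝ)
    (hg : ∀ i, 0 ≤ g i) {q : ℝ} (hq : 0 ≤ q) :
    (⨆ i, g i) ^ q = ⨆ i, g i ^ q := by
  obtain ⟨i₀, hi₀⟩ := ciSup_attained g
  have hmax : ∀ j, g j ≤ g i₀ := fun j =>
    hi₀ ▸ le_ciSup (Set.finite_range g).bddAbove j
  have h₂ : (⨆ i, g i ^ q) = g i₀ ^ q := by
    refine le_antisymm (ciSup_le fun j => Real.rpow_le_rpow (hg j) (hmax j) hq) ?_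
    exact le_ciSup (Set.finite_range fun i => g i ^ q).bddAbove i₀
  rw [hi₀, h₂]

lemma rpow_ciInf_pos {ι : Type*} [Nonempty ι] (g : ι → ℝ)
    (hg : ∀ i, 0 ≤ g i) {q : ℝ} (hq : 0 < q) :
    (⨅ i, g i) ^ q = ⨅ i, g i ^ q := by
  have hbdd : BddBelow (Set.range g) := ⟨0, by rintro x ⟨i, rfl⟩; exact hg i⟩
  have hbdd' : BddBelow (Set.range fun i => g i ^ q) :=
    ⟨0, by rintro x ⟨i, rfl⟩; exact Real.rpow_nonneg (hg i) q⟩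
  have hinf0 : 0 ≤ ⨅ i, g i := le_ciInf hg
  have hI0 : 0 ≤ ⨅ i, g i ^ q := le_ciInf fun i => Real.rpow_nonneg (hg i) q
  refine le_antisymm (le_ciInf fun i => Real.rpow_le_rpow hinf0 (ciInf_le hbdd i) hq.le) ?_
  have key : ∀ i, (⨅ i, g i ^ q) ^ (1 / q) ≤ g i := by
    intro i
    have h1 : (⨅ i, g i ^ q) ≤ g i ^ q := ciInf_le hbdd' i
    calc (⨅ i, g i ^ q) ^ (1 / q) ≤ (g i ^ q) ^ (1 / q) :=
          Real.rpow_le_rpow hI0 h1 (by positivity)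
      _ = g i := by
          rw [← Real.rpow_mul (hg i), mul_one_div_cancel hq.ne', Real.rpow_one]
  have h2 : (⨅ i, g i ^ q) ^ (1 / q) ≤ ⨅ i, g i := le_ciInf key
  calc (⨅ i, g i ^ q) = ((⨅ i, g i ^ q) ^ (1 / q)) ^ q := by
        rw [← Real.rpow_mul hI0, one_div_mul_cancel hq.ne', Real.rpow_one]
    _ ≤ (⨅ i, g i) ^ q := Real.rpow_le_rpow (Real.rpow_nonneg hI0 _) h2 hq.le

/-- Strong `L_q` duality (Theorem 2.1(1)): if `n + 1 ≤ m`, `Ψ` satisfies the discrete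
Haar condition, `q ≥ 1` and `η* > 0`, then `sup_{w ∈ S} d_q(w) = (η*)^q`. -/
theorem strong_duality
    (m n : ℕ) (hm : 0 < m) (hn : 0 < n) (hnm : n + 1 ≤ m)
    (f : Fin m → ℂ) (Ψ : Matrix (Fin m) (Fin n) ℂ)
    (hHaar : ∀ ρ : Fin n → Fin m, Function.Injective ρ →
      IsUnit (Matrix.of fun i j => Ψ (ρ i) j : Matrix (Fin n) (Fin n) ℂ))
    (q : ℝ) (hq : 1 ≤ q)
    (hη : 0 < ⨅ a : Fin n → ℂ, ⨆ j, ‖f j - Ψ.mulVec a j‖) :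
    (⨆ w : {w : Fin m → ℝ // (∀ j, 0 ≤ w j) ∧ ∑ j, w j = 1},
        ⨅ a : Fin n → ℂ, ∑ j, (w : Fin m → ℝ) j * ‖f j - Ψ.mulVec a j‖ ^ q)
      = (⨅ a : Fin n → ℂ, ⨆ j, ‖f j - Ψ.mulVec a j‖) ^ q := by
  haveI : Nonempty (Fin m) := ⟨⟨0, hm⟩⟩
  have hq0 : (0:ℝ) < q := lt_of_lt_of_le one_pos hq
  -- notation
  set G : Fin m → (Fin n → ℂ) → ℝ := fun j a => ‖f j - Ψ.mulVec a j‖ with hGdef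
  set h : Fin m → (Fin n → ℂ) → ℝ := fun j a => G j a ^ q with hhdef
  have hG0 : ∀ j a, 0 ≤ G j a := fun j a => norm_nonneg _
  have hh0 : ∀ j a, 0 ≤ h j a := fun j a => Real.rpow_nonneg (hG0 j a) q
  set S : (Fin n → ℂ) → ℝ := fun a => ⨆ j, G j a with hSdef
  set T : (Fin n → ℂ) → ℝ := fun a => ⨆ j, h j a with hTdef
  have hT0 : ∀ a, 0 ≤ T a := fun a => Real.iSup_nonneg (fun j => hh0 j a)
  have hTS : ∀ a, T a = S a ^ q := fun a =>
    (rpow_ciSup_fin (fun j => G j a) (fun j => hG0 j a) hq0.le).symm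
  set E : ℝ := ⨅ a, T a with hEdef
  have hTbdd : BddBelow (Set.range T) := ⟨0, by rintro x ⟨a, rfl⟩; exact hT0 a⟩
  have hE0 : 0 ≤ E := le_ciInf hT0
  have h_le_T : ∀ j a, h j a ≤ T a := fun j a =>
    le_ciSup (Set.finite_range fun j => h j a).bddAbove j
  -- the two convex sets
  set D : Set (Fin m → ℝ) := Set.univ.pi (fun _ => Iio E) with hDdef
  set C : Set (Fin m → ℝ) := {y | ∃ a, ∀ j, h j a ≤ y j} with hCdef
  have hDmem : ∀ y : Fin m → ℝ, y ∈ D ↔ ∀ j, y j < E := by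
    intro y; simp [hDdef, Set.mem_pi]
  have hDopen : IsOpen D := isOpen_set_pi Set.finite_univ (fun i _ => isOpen_Iio)
  have hDconv : Convex ℝ D := convex_pi (fun i _ => convex_Iio E)
  have hCconv : Convex ℝ C := by
    rintro y₁ ⟨a₁, ha₁⟩ y₂ ⟨a₂, ha₂⟩ lam mu hlam hmu hsum
    refine ⟨(lam:ℂ) • a₁ + (mu:ℂ) • a₂, fun j => ?_⟩
    have hc : (lam:ℂ) + (mu:ℂ) = 1 := by exact_mod_cast hsum
    have hres : f j - Ψ.mulVec ((lam:ℂ) • a₁ + (mu:ℂ) • a₂) j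
        = (lam:ℂ) * (f j - Ψ.mulVec a₁ j) + (mu:ℂ) * (f j - Ψ.mulVec a₂ j) := by
      rw [Matrix.mulVec_add, Matrix.mulVec_smul, Matrix.mulVec_smul]
      simp only [Pi.add_apply, Pi.smul_apply, smul_eq_mul]
      linear_combination (-(f j)) * hc
    have habs : G j ((lam:ℂ) • a₁ + (mu:ℂ) • a₂) ≤ lam * G j a₁ + mu * G j a₂ := by
      simp only [hGdef]
      rw [hres]
      calc ‖(lam:ℂ) * (f j - Ψ.mulVec a₁ j) + (mu:ℂ) * (f j - Ψ.mulVec a₂ j)‖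
          ≤ ‖(lam:ℂ) * (f j - Ψ.mulVec a₁ j)‖
            + ‖(mu:ℂ) * (f j - Ψ.mulVec a₂ j)‖ := norm_add_le _ _
        _ = lam * ‖f j - Ψ.mulVec a₁ j‖
            + mu * ‖f j - Ψ.mulVec a₂ j‖ := by
            rw [norm_mul, norm_mul, Complex.norm_of_nonneg hlam, Complex.norm_of_nonneg hmu]
    have hconv := (convexOn_rpow hq).2 (Set.mem_Ici.2 (hG0 j a₁)) (Set.mem_Ici.2 (hG0 j a₂))
      hlam hmu hsum
    simp only [smul_eq_mul] at hconv
    calc h j ((lam:ℂ) • a₁ + (mu:ℂ) • a₂)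
        ≤ (lam * G j a₁ + mu * G j a₂) ^ q :=
          Real.rpow_le_rpow (hG0 j _) habs hq0.le
      _ ≤ lam * G j a₁ ^ q + mu * G j a₂ ^ q := hconv
      _ ≤ lam * y₁ j + mu * y₂ j := by
          have := ha₁ j; have := ha₂ j
          gcongr
  have hdisj : Disjoint D C := by
    rw [Set.disjoint_left]
    rintro y hyD ⟨a, ha⟩
    obtain ⟨j₀, hj₀⟩ := ciSup_attained (fun j => h j a)
    have h1 : E ≤ T a := ciInf_le hTbdd a
    have h2 : T a = h j₀ a := hj₀
    have h3 : y j₀ < E := (hDmem y).1 hyD j₀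
    have h4 : h j₀ a ≤ y j₀ := ha j₀
    linarith
  obtain ⟨φ, u, hφD, hφC⟩ := geometric_hahn_banach_open hDconv hDopen hCconv hdisj
  -- coordinates of φ
  set wt : Fin m → ℝ := fun j => φ (Pi.single j 1) with hwtdef
  have hrep : ∀ y : Fin m → ℝ, φ y = ∑ j, y j * wt j := by
    intro y
    have hy : y = ∑ j, y j • (Pi.single j 1 : Fin m → ℝ) := by
      funext i
      rw [Finset.sum_apply]
      simp [Pi.single_apply]
    conv_lhs => rw [hy]
    rw [map_sum]
    simp [smul_eq_mul]
    rfl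
  have hy0D : (fun _ : Fin m => E - 1) ∈ D := (hDmem _).2 (fun j => by linarith)
  have hφy0 : φ (fun _ => E - 1) < u := hφD _ hy0D
  have hw0 : ∀ j, 0 ≤ wt j := by
    intro j
    by_contra hneg
    push_neg at hneg
    set c : ℝ := -wt j with hcdef
    have hc : 0 < c := by rw [hcdef]; linarith
    set t : ℝ := (u - φ (fun _ => E - 1)) / c + 1 with htdef
    have ht : 0 < t := by
      rw [htdef]
      have h5 : 0 < (u - φ fun _ => E - 1) / c := div_pos (by linarith) hc
      linarith
    have hmemD : ((fun _ : Fin m => E - 1) - t • (Pi.single j (1:ℝ) : Fin m → ℝ)) ∈ D := by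
      refine (hDmem _).2 (fun i => ?_)
      have hiv : ((fun _ : Fin m => E - 1) - t • (Pi.single j (1:ℝ) : Fin m → ℝ)) i
          = E - 1 - t * (Pi.single j (1:ℝ) : Fin m → ℝ) i := rfl
      rw [hiv]
      by_cases hij : i = j
      · subst hij; rw [Pi.single_eq_same]; linarith
      · rw [Pi.single_eq_of_ne hij]; simp
    have hval : φ ((fun _ : Fin m => E - 1) - t • (Pi.single j (1:ℝ) : Fin m → ℝ))
        = φ (fun _ => E - 1) + t * c := by
      rw [map_sub, map_smul, smul_eq_mul]
      have hwj : φ (Pi.single j (1:ℝ)) = wt j := by rw [hwtdef]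
      rw [hwj, hcdef]; ring
    have hlt := hφD _ hmemD
    rw [hval, htdef] at hlt
    have : (u - φ (fun _ => E - 1)) / c * c = u - φ (fun _ => E - 1) :=
      div_mul_cancel₀ _ hc.ne'
    nlinarith
  have hCne : (fun j => h j 0) ∈ C := ⟨0, fun j => le_rfl⟩
  have hWpos : 0 < ∑ j, wt j := by
    have hsumnn : (0:ℝ) ≤ ∑ j, wt j := Finset.sum_nonneg fun j _ => hw0 j
    rcases hsumnn.lt_or_eq with hlt | heq
    · exact hlt
    · exfalso
      have hall0 : ∀ j, wt j = 0 := fun j =>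
        (Finset.sum_eq_zero_iff_of_nonneg (fun j _ => hw0 j)).1 heq.symm j (Finset.mem_univ j)
      have hφ0 : ∀ y, φ y = 0 := by
        intro y; rw [hrep]; simp [hall0]
      have h1 : (0:ℝ) < u := by rw [hφ0] at hφy0; exact hφy0
      have h2 : u ≤ 0 := by have h3 := hφC _ hCne; rw [hφ0] at h3; exact h3
      linarith
  set W : ℝ := ∑ j, wt j with hWdef
  -- E * W ≤ u
  have hEWu : E * W ≤ u := by
    refine le_of_forall_pos_le_add (fun ε hε => ?_)
    set t : ℝ := ε / W with htdef
    have ht : 0 < t := div_pos hε hWpos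
    have hmem : (fun _ : Fin m => E - t) ∈ D := (hDmem _).2 (fun j => by linarith)
    have hval : φ (fun _ : Fin m => E - t) = (E - t) * W := by
      rw [hrep]
      rw [hWdef, Finset.mul_sum]
    have hlt := hφD _ hmem
    rw [hval] at hlt
    have htW : t * W = ε := by rw [htdef]; field_simp
    nlinarith
  -- the dual certificate
  set v : Fin m → ℝ := fun j => wt j / W with hvdef
  have hv1 : ∀ j, 0 ≤ v j := fun j => div_nonneg (hw0 j) hWpos.le
  have hv2 : ∑ j, v j = 1 := by
    simp only [hvdef]
    rw [← Finset.sum_div, ← hWdef, div_self hWpos.ne']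
  have hkey : ∀ a, E ≤ ∑ j, v j * h j a := by
    intro a
    have hmemC : (fun j => h j a) ∈ C := ⟨a, fun j => le_rfl⟩
    have h1 : u ≤ ∑ j, h j a * wt j := by
      have := hφC _ hmemC; rwa [hrep] at this
    have h2 : E * W ≤ ∑ j, h j a * wt j := le_trans hEWu h1
    have h3 : ∑ j, v j * h j a = (∑ j, h j a * wt j) / W := by
      rw [Finset.sum_div]
      refine Finset.sum_congr rfl (fun j _ => ?_)
      rw [hvdef]; ring
    rw [h3, le_div_iff₀ hWpos]
    linarith [h2]
  -- weak duality : every feasible w gives value ≤ E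
  have hub : ∀ w : {w : Fin m → ℝ // (∀ j, 0 ≤ w j) ∧ ∑ j, w j = 1},
      (⨅ a : Fin n → ℂ, ∑ j, (w : Fin m → ℝ) j * h j a) ≤ E := by
    rintro ⟨w, hw1, hw2⟩
    refine le_ciInf (fun a => ?_)
    have hbdd : BddBelow (Set.range fun a : Fin n → ℂ => ∑ j, w j * h j a) := by
      refine ⟨0, ?_⟩
      rintro x ⟨a, rfl⟩
      exact Finset.sum_nonneg fun j _ => mul_nonneg (hw1 j) (hh0 j a)
    have h1 : (⨅ a : Fin n → ℂ, ∑ j, w j * h j a) ≤ ∑ j, w j * h j a :=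
      ciInf_le hbdd a
    have h2 : ∑ j, w j * h j a ≤ T a := by
      calc ∑ j, w j * h j a ≤ ∑ j, w j * T a :=
            Finset.sum_le_sum fun j _ => mul_le_mul_of_nonneg_left (h_le_T j a) (hw1 j)
        _ = T a := by rw [← Finset.sum_mul, hw2, one_mul]
    exact h1.trans h2
  have hBdd : BddAbove (Set.range fun w : {w : Fin m → ℝ //
      (∀ j, 0 ≤ w j) ∧ ∑ j, w j = 1} =>
      ⨅ a : Fin n → ℂ, ∑ j, (w : Fin m → ℝ) j * h j a) := by
    refine ⟨E, ?_⟩; rintro x ⟨w, rfl⟩; exact hub w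
  haveI : Nonempty {w : Fin m → ℝ // (∀ j, 0 ≤ w j) ∧ ∑ j, w j = 1} := ⟨⟨v, hv1, hv2⟩⟩
  have hlbv : E ≤ ⨅ a : Fin n → ℂ, ∑ j, v j * h j a := le_ciInf hkey
  have hmain : (⨆ w : {w : Fin m → ℝ // (∀ j, 0 ≤ w j) ∧ ∑ j, w j = 1},
      ⨅ a : Fin n → ℂ, ∑ j, (w : Fin m → ℝ) j * h j a) = E := by
    refine le_antisymm (ciSup_le hub) ?_
    exact hlbv.trans (le_ciSup hBdd ⟨v, hv1, hv2⟩)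
  have hEfinal : E = (⨅ a, S a) ^ q := by
    rw [hEdef]
    have : ∀ a, T a = S a ^ q := hTS
    rw [iInf_congr this]
    exact (rpow_ciInf_pos S (fun a => Real.iSup_nonneg (fun j => hG0 j a)) hq0).symm
  calc (⨆ w : {w : Fin m → ℝ // (∀ j, 0 ≤ w j) ∧ ∑ j, w j = 1},
        ⨅ a : Fin n → ℂ, ∑ j, (w : Fin m → ℝ) j * ‖f j - Ψ.mulVec a j‖ ^ q)
      = E := hmain
    _ = (⨅ a, S a) ^ q := hEfinal
end

section
/- (Complementary slackness, Theorem 2.1(1)) Assume n + 1 ≤ m, Ψ satisfies the discrete Haar condition, q ≥ 1, and η* > 0. Let a* ∈ ℂ^n attain the minimax value, i.e. max_{1≤j≤m} |f_j − (Ψ a*)_j| = η*, and let w* ∈ S attain sup_{w ∈ S} d_q(w). Then for every j = 1,…,m one has w*_j · (η* − |f_j − (Ψ a*)_j|) = 0. -/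
open scoped BigOperators

lemma exists_conv_weights {m n : ℕ} (v : Fin m → Fin n → ℂ) (E : Finset (Fin m))
    (h : ¬ ∃ d : Fin n → ℂ, ∃ ε : ℝ, 0 < ε ∧ ∀ j ∈ E, ε ≤ (∑ k, v j k * d k).re) :
    ∃ w : Fin m → ℝ, (∀ j, 0 ≤ w j) ∧ (∀ j, w j ≠ 0 → j ∈ E) ∧ ∑ j, w j = 1 ∧
      ∀ k, ∑ j, (w j : ℂ) * v j k = 0 := by
  classical
  -- the linear map from weights on E to ℂ^n
  set T : ({x // x ∈ E} → ℝ) →ₗ[ℝ] (Fin n → ℂ) :=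
    { toFun := fun u => ∑ i : {x // x ∈ E}, u i • v i.val
      map_add' := by
        intro u u'; simp [add_smul, Finset.sum_add_distrib]
      map_smul' := by
        intro c u; simp [mul_smul, Finset.smul_sum] } with hT
  set K : Set (Fin n → ℂ) := T '' stdSimplex ℝ {x // x ∈ E} with hK
  by_cases h0 : (0 : Fin n → ℂ) ∈ K
  · obtain ⟨u, hu, hsum⟩ := h0
    refine ⟨fun j => if hj : j ∈ E then u ⟨j, hj⟩ else 0, ?_, ?_, ?_, ?_⟩
    · intro j; by_cases hj : j ∈ E
      · simpa [hj] using hu.1 ⟨j, hj⟩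
      · simp [hj]
    · intro j hj; by_contra hjE; simp [hjE] at hj
    · have h1 : ∑ j ∈ E, (if hj : j ∈ E then u ⟨j, hj⟩ else 0) = ∑ i : {x // x ∈ E}, u i := by
        rw [← Finset.sum_attach E (fun j => if hj : j ∈ E then u ⟨j, hj⟩ else 0)]
        rw [Finset.univ_eq_attach]
        exact Finset.sum_congr rfl (fun i _ => by simp [i.2])
      rw [← Finset.sum_subset E.subset_univ (fun x _ hx => dif_neg hx), h1, hu.2]
    · intro k
      have h2 : ∑ i : {x // x ∈ E}, u i • v i.val k = 0 := by
        simpa [hT, Finset.sum_apply] using congrFun hsum k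
      have h1 : ∑ j ∈ E, ((if hj : j ∈ E then u ⟨j, hj⟩ else 0 : ℝ) : ℂ) * v j k
          = ∑ i : {x // x ∈ E}, u i • v i.val k := by
        rw [← Finset.sum_attach E (fun j => ((if hj : j ∈ E then u ⟨j, hj⟩ else 0 : ℝ) : ℂ) * v j k)]
        rw [Finset.univ_eq_attach]
        refine Finset.sum_congr rfl (fun i _ => ?_)
        simp [i.2, Complex.real_smul]
      rw [← Finset.sum_subset E.subset_univ (fun x _ hx => by simp [dif_neg hx]), h1, h2]
  · exfalso
    apply h
    have hKconv : Convex ℝ K := (convex_stdSimplex ℝ _).linear_image T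
    have hKcl : IsClosed K :=
      ((isCompact_stdSimplex ℝ _).image T.continuous_of_finiteDimensional).isClosed
    obtain ⟨φ, u0, hφ0, hφK⟩ := geometric_hahn_banach_point_closed hKconv hKcl h0
    rw [map_zero] at hφ0
    -- representation of φ
    set d : Fin n → ℂ := fun k => ⟨φ (Pi.single k 1), -φ (Pi.single k Complex.I)⟩ with hd
    have hrep : ∀ x : Fin n → ℂ, φ x = (∑ k, x k * d k).re := by
      intro x
      have hx : x = ∑ k, Pi.single k (x k) := (Finset.univ_sum_single x).symm
      rw [hx, map_sum, Complex.re_sum]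
      refine Finset.sum_congr rfl (fun k _ => ?_)
      have hz : Pi.single k (x k) =
          (x k).re • (Pi.single k (1 : ℂ) : Fin n → ℂ)
            + (x k).im • (Pi.single k Complex.I : Fin n → ℂ) := by
        rw [← Pi.single_smul, ← Pi.single_smul, ← Pi.single_add]
        congr 1
        simp only [Complex.real_smul, smul_eq_mul]
        simp [Complex.ext_iff]
      rw [hz, map_add, map_smul, map_smul, smul_eq_mul, smul_eq_mul]
      simp [hd, Complex.mul_re]
    have hvK : ∀ j (hj : j ∈ E), v j ∈ K := by
      intro j hj
      refine ⟨fun i => if i = ⟨j, hj⟩ then 1 else 0, ⟨fun i => by positivity, by simp⟩, ?_⟩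
      show ∑ i : {x // x ∈ E}, (if i = ⟨j, hj⟩ then (1:ℝ) else 0) • v i.val = v j
      simp [ite_smul]
    exact ⟨d, u0, hφ0, fun j hj => le_of_lt (by rw [← hrep]; exact hφK _ (hvK j hj))⟩

lemma no_descent {m n : ℕ} (hm : 0 < m) (f : Fin m → ℂ) (Ψ : Matrix (Fin m) (Fin n) ℂ)
    (hη : 0 < ⨅ a : Fin n → ℂ, ⨆ j, ‖f j - Ψ.mulVec a j‖)
    (astar : Fin n → ℂ)
    (hastar : (⨆ j, ‖f j - Ψ.mulVec astar j‖)
      = ⨅ a : Fin n → ℂ, ⨆ j, ‖f j - Ψ.mulVec a j‖) :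
    ¬ ∃ d : Fin n → ℂ, ∃ ε : ℝ, 0 < ε ∧ ∀ j ∈ Finset.univ.filter
        (fun j => ‖f j - Ψ.mulVec astar j‖
          = ⨅ a : Fin n → ℂ, ⨆ j', ‖f j' - Ψ.mulVec a j'‖),
      ε ≤ (∑ k, ((starRingEnd ℂ) (f j - Ψ.mulVec astar j) * Ψ j k) * d k).re := by
  haveI : Nonempty (Fin m) := ⟨⟨0, hm⟩⟩
  rintro ⟨d, ε, hε, hdesc⟩
  set η : ℝ := ⨅ a : Fin n → ℂ, ⨆ j, ‖f j - Ψ.mulVec a j‖ with hηdef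
  set r : Fin m → ℂ := fun j => f j - Ψ.mulVec astar j with hrdef
  set g : Fin m → ℂ := Ψ.mulVec d with hgdef
  have hAle : ∀ j, ‖r j‖ ≤ η := by
    intro j
    rw [← hastar]
    exact le_ciSup (f := fun j => ‖f j - Ψ.mulVec astar j‖)
      (Set.Finite.bddAbove (Set.finite_range _)) j
  -- step bounds
  set b : Fin m → ℝ := fun j =>
    if ‖r j‖ = η then ε / max 1 (Complex.normSq (g j))
    else (η - ‖r j‖) / (2 * max 1 (‖g j‖)) with hbdef
  have hbpos : ∀ j, 0 < b j := by
    intro j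
    by_cases hj : ‖r j‖ = η
    · simp only [hbdef, if_pos hj]
      exact div_pos hε (lt_of_lt_of_le one_pos (le_max_left _ _))
    · simp only [hbdef, if_neg hj]
      apply div_pos (by cases lt_or_eq_of_le (hAle j) with
        | inl h => linarith
        | inr h => exact absurd h hj)
      positivity
  set t : ℝ := Finset.univ.inf' ⟨⟨0, hm⟩, Finset.mem_univ _⟩ b with htdef
  have ht : 0 < t := (Finset.lt_inf'_iff _).2 fun j _ => hbpos j
  have htb : ∀ j, t ≤ b j := fun j => Finset.inf'_le _ (Finset.mem_univ j)
  set a' : Fin n → ℂ := astar + (t : ℂ) • d with ha'def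
  have hres : ∀ j, f j - Ψ.mulVec a' j = r j - (t : ℂ) * g j := by
    intro j
    simp only [ha'def, Matrix.mulVec_add, Matrix.mulVec_smul, hrdef, hgdef,
      Pi.add_apply, Pi.smul_apply, smul_eq_mul]
    ring
  have key : ∀ j, ‖f j - Ψ.mulVec a' j‖ < η := by
    intro j
    rw [hres j]
    by_cases hj : ‖r j‖ = η
    · -- active index
      have hre : ε ≤ ((starRingEnd ℂ) (r j) * g j).re := by
        have h1 := hdesc j (Finset.mem_filter.2 ⟨Finset.mem_univ _, hj⟩)
        have h2 : ∑ k, ((starRingEnd ℂ) (r j) * Ψ j k) * d k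
            = (starRingEnd ℂ) (r j) * g j := by
          rw [hgdef]
          show _ = _ * Ψ.mulVec d j
          rw [Matrix.mulVec, dotProduct, Finset.mul_sum]
          exact Finset.sum_congr rfl fun k _ => by ring
        rwa [h2] at h1
      have hsq : ‖r j - (t : ℂ) * g j‖ ^ 2
          = ‖r j‖ ^ 2 - 2 * t * ((starRingEnd ℂ) (r j) * g j).re
            + t ^ 2 * Complex.normSq (g j) := by
        rw [Complex.sq_norm, Complex.sq_norm, Complex.normSq_sub, Complex.normSq_mul,
          Complex.normSq_ofReal]
        have : (r j * (starRingEnd ℂ) ((t : ℂ) * g j)).re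
            = t * ((starRingEnd ℂ) (r j) * g j).re := by
          simp [Complex.mul_re, Complex.conj_re, Complex.conj_im]
          ring
        rw [this]; ring
      have hmax : (0:ℝ) < max 1 (Complex.normSq (g j)) :=
        lt_of_lt_of_le one_pos (le_max_left _ _)
      have htn : t * Complex.normSq (g j) ≤ ε := by
        have h1 : t * Complex.normSq (g j) ≤ (ε / max 1 (Complex.normSq (g j))) * Complex.normSq (g j) := by
          apply mul_le_mul_of_nonneg_right _ (Complex.normSq_nonneg _)
          calc t ≤ b j := htb j
            _ = _ := by simp [hbdef, if_pos hj]
        have h2 : (ε / max 1 (Complex.normSq (g j))) * Complex.normSq (g j) ≤ ε := by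
          rw [div_mul_eq_mul_div, div_le_iff₀ hmax]
          exact mul_le_mul_of_nonneg_left (le_max_right _ _) hε.le
        linarith
      have habs : ‖r j - (t : ℂ) * g j‖ ^ 2 < η ^ 2 := by
        rw [hsq, hj]
        nlinarith
      nlinarith [norm_nonneg (r j - (t : ℂ) * g j), hη]
    · -- inactive index
      have hjlt : ‖r j‖ < η := lt_of_le_of_ne (hAle j) hj
      have htri : ‖r j - (t : ℂ) * g j‖
          ≤ ‖r j‖ + t * ‖g j‖ := by
        calc ‖r j - (t : ℂ) * g j‖
            = ‖r j - (t : ℂ) * g j‖ := rfl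
          _ ≤ ‖r j‖ + ‖(t : ℂ) * g j‖ := norm_sub_le _ _
          _ = ‖r j‖ + ‖(t : ℂ) * g j‖ := by
              rfl
          _ = ‖r j‖ + t * ‖g j‖ := by
              rw [norm_mul, Complex.norm_real, Real.norm_eq_abs, abs_of_pos ht]
      have hmax : (0:ℝ) < max 1 (‖g j‖) :=
        lt_of_lt_of_le one_pos (le_max_left _ _)
      have hb : t ≤ (η - ‖r j‖) / (2 * max 1 (‖g j‖)) := by
        calc t ≤ b j := htb j
          _ = _ := by simp [hbdef, if_neg hj]
      have h1 : t * ‖g j‖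
          ≤ ((η - ‖r j‖) / (2 * max 1 (‖g j‖))) * max 1 (‖g j‖) := by
        apply mul_le_mul hb (le_max_right _ _) (norm_nonneg _)
        apply div_nonneg (by linarith) (by positivity)
      have h2 : ((η - ‖r j‖) / (2 * max 1 (‖g j‖))) * max 1 (‖g j‖)
          = (η - ‖r j‖) / 2 := by
        field_simp
      linarith
  obtain ⟨j0, hj0⟩ := Finite.exists_max fun j => ‖f j - Ψ.mulVec a' j‖
  have hsup : (⨆ j, ‖f j - Ψ.mulVec a' j‖) < η :=
    lt_of_le_of_lt (ciSup_le hj0) (key j0)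
  have hbb : BddBelow (Set.range fun a : Fin n → ℂ => ⨆ j, ‖f j - Ψ.mulVec a j‖) := by
    refine ⟨0, ?_⟩
    rintro x ⟨a, rfl⟩
    exact le_ciSup_of_le (Set.Finite.bddAbove (Set.finite_range _)) ⟨0, hm⟩ (norm_nonneg _)
  have : η ≤ ⨆ j, ‖f j - Ψ.mulVec a' j‖ := ciInf_le hbb a'
  linarith

lemma weight_lower_bound {m n : ℕ} (f : Fin m → ℂ) (Ψ : Matrix (Fin m) (Fin n) ℂ)
    (astar : Fin n → ℂ) (η : ℝ) (hη : 0 < η)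
    (w : Fin m → ℝ) (hw0 : ∀ j, 0 ≤ w j)
    (hsupp : ∀ j, w j ≠ 0 → ‖f j - Ψ.mulVec astar j‖ = η)
    (hw1 : ∑ j, w j = 1)
    (hv : ∀ k, ∑ j, (w j : ℂ) * ((starRingEnd ℂ) (f j - Ψ.mulVec astar j) * Ψ j k) = 0)
    (a : Fin n → ℂ) :
    η ≤ ∑ j, w j * ‖f j - Ψ.mulVec a j‖ := by
  set r : Fin m → ℂ := fun j => f j - Ψ.mulVec astar j with hrdef
  set z : Fin m → ℂ := fun j => f j - Ψ.mulVec a j with hzdef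
  have hzr : ∀ j, z j = r j + Ψ.mulVec (astar - a) j := by
    intro j
    simp only [hzdef, hrdef, Matrix.mulVec_sub, Pi.sub_apply]
    ring
  have hS : ∑ j, (w j : ℂ) * ((starRingEnd ℂ) (r j) * z j) = ((η ^ 2 : ℝ) : ℂ) := by
    have hsplit : ∀ j, (w j : ℂ) * ((starRingEnd ℂ) (r j) * z j)
        = (w j : ℂ) * ((starRingEnd ℂ) (r j) * r j)
          + (w j : ℂ) * ((starRingEnd ℂ) (r j) * Ψ.mulVec (astar - a) j) := by
      intro j; rw [hzr j]; ring
    rw [Finset.sum_congr rfl fun j _ => hsplit j, Finset.sum_add_distrib]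
    have h1 : ∑ j, (w j : ℂ) * ((starRingEnd ℂ) (r j) * r j) = ((η ^ 2 : ℝ) : ℂ) := by
      have : ∀ j, (w j : ℂ) * ((starRingEnd ℂ) (r j) * r j) = (w j : ℂ) * ((η ^ 2 : ℝ) : ℂ) := by
        intro j
        rcases eq_or_ne (w j) 0 with h | h
        · simp [h]
        · rw [mul_comm ((starRingEnd ℂ) (r j)), Complex.mul_conj]
          congr 2
          rw [Complex.normSq_eq_norm_sq, hsupp j h]
      rw [Finset.sum_congr rfl fun j _ => this j, ← Finset.sum_mul, ← Complex.ofReal_sum,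
        hw1, Complex.ofReal_one, one_mul]
    have h2 : ∑ j, (w j : ℂ) * ((starRingEnd ℂ) (r j) * Ψ.mulVec (astar - a) j) = 0 := by
      have hterm : ∀ j, (w j : ℂ) * ((starRingEnd ℂ) (r j) * Ψ.mulVec (astar - a) j)
          = ∑ k, ((w j : ℂ) * ((starRingEnd ℂ) (r j) * Ψ j k)) * (astar - a) k := by
        intro j
        rw [Matrix.mulVec, dotProduct, Finset.mul_sum, Finset.mul_sum]
        exact Finset.sum_congr rfl fun k _ => by ring
      rw [Finset.sum_congr rfl fun j _ => hterm j, Finset.sum_comm]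
      refine Finset.sum_eq_zero fun k _ => ?_
      rw [← Finset.sum_mul]
      have := hv k
      have this : ∑ j, (w j : ℂ) * ((starRingEnd ℂ) (r j) * Ψ j k) = 0 := this
      rw [this, zero_mul]
    rw [h1, h2, add_zero]
  have hterm : ∀ j, ((w j : ℂ) * ((starRingEnd ℂ) (r j) * z j)).re
      ≤ w j * ‖z j‖ * η := by
    intro j
    rcases eq_or_ne (w j) 0 with h | h
    · simp [h]
    · have h1 := Complex.re_le_norm ((w j : ℂ) * ((starRingEnd ℂ) (r j) * z j))
      have h2 : ‖(w j : ℂ) * ((starRingEnd ℂ) (r j) * z j)‖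
          = w j * ‖z j‖ * η := by
        rw [norm_mul, norm_mul, Complex.norm_real, Real.norm_eq_abs, Complex.norm_conj, abs_of_nonneg (hw0 j),
          hsupp j h]
        ring
      linarith
  have hre : (η : ℝ) ^ 2 ≤ ∑ j, w j * ‖z j‖ * η := by
    have := congrArg Complex.re hS
    rw [Complex.re_sum, Complex.ofReal_re] at this
    calc (η : ℝ) ^ 2 = ∑ j, ((w j : ℂ) * ((starRingEnd ℂ) (r j) * z j)).re := this.symm
      _ ≤ _ := Finset.sum_le_sum fun j _ => hterm j
  have : η * η ≤ (∑ j, w j * ‖z j‖) * η := by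
    rw [Finset.sum_mul]
    calc η * η = η ^ 2 := (sq η).symm
      _ ≤ _ := hre
  exact le_of_mul_le_mul_right this hη

/-- Complementary slackness (Theorem 2.1(1)): if `a*` attains the minimax value `η*` and
`w* ∈ S` maximizes `d_q` over the simplex `S`, then `w*_j (η* − |f_j − (Ψ a*)_j|) = 0`
for every `j`. -/
theorem complementary_slackness
    (m n : ℕ) (hm : 0 < m) (hn : 0 < n) (hnm : n + 1 ≤ m)
    (f : Fin m → ℂ) (Ψ : Matrix (Fin m) (Fin n) ℂ)
    (hHaar : ∀ ρ : Fin n → Fin m, Function.Injective ρ →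
      IsUnit (Matrix.of fun i j => Ψ (ρ i) j : Matrix (Fin n) (Fin n) ℂ))
    (q : ℝ) (hq : 1 ≤ q)
    (hη : 0 < ⨅ a : Fin n → ℂ, ⨆ j, ‖f j - Ψ.mulVec a j‖)
    (astar : Fin n → ℂ)
    (hastar : (⨆ j, ‖f j - Ψ.mulVec astar j‖)
      = ⨅ a : Fin n → ℂ, ⨆ j, ‖f j - Ψ.mulVec a j‖)
    (wstar : Fin m → ℝ) (hwstar0 : ∀ j, 0 ≤ wstar j) (hwstar1 : ∑ j, wstar j = 1)
    (hwstarMax : ∀ w : Fin m → ℝ, (∀ j, 0 ≤ w j) → ∑ j, w j = 1 →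
      (⨅ a : Fin n → ℂ, ∑ j, w j * ‖f j - Ψ.mulVec a j‖ ^ q)
        ≤ ⨅ a : Fin n → ℂ, ∑ j, wstar j * ‖f j - Ψ.mulVec a j‖ ^ q) :
    ∀ j, wstar j *
      ((⨅ a : Fin n → ℂ, ⨆ j', ‖f j' - Ψ.mulVec a j'‖)
        - ‖f j - Ψ.mulVec astar j‖) = 0 := by
  classical
  haveI : Nonempty (Fin m) := ⟨⟨0, hm⟩⟩
  set η : ℝ := ⨅ a : Fin n → ℂ, ⨆ j, ‖f j - Ψ.mulVec a j‖ with hηdef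
  have hAle : ∀ j, ‖f j - Ψ.mulVec astar j‖ ≤ η := fun j => by
    rw [← hastar]
    exact le_ciSup (f := fun j => ‖f j - Ψ.mulVec astar j‖)
      (Set.Finite.bddAbove (Set.finite_range _)) j
  obtain ⟨w, hw0, hwsupp, hw1, hv⟩ :=
    exists_conv_weights (fun j k => (starRingEnd ℂ) (f j - Ψ.mulVec astar j) * Ψ j k)
      (Finset.univ.filter fun j => ‖f j - Ψ.mulVec astar j‖ = η)
      (no_descent hm f Ψ hη astar hastar)
  have hsupp' : ∀ j, w j ≠ 0 → ‖f j - Ψ.mulVec astar j‖ = η := fun j hj =>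
    (Finset.mem_filter.1 (hwsupp j hj)).2
  have hq0 : (0:ℝ) < q := lt_of_lt_of_le one_pos hq
  have hlow : ∀ a : Fin n → ℂ, η ^ q ≤ ∑ j, w j * ‖f j - Ψ.mulVec a j‖ ^ q := by
    intro a
    have h1 := weight_lower_bound f Ψ astar η hη w hw0 hsupp' hw1 hv a
    have h2 := Real.rpow_arith_mean_le_arith_mean_rpow Finset.univ w
      (fun j => ‖f j - Ψ.mulVec a j‖) (fun i _ => hw0 i) hw1
      (fun i _ => norm_nonneg _) hq
    have h3 : η ^ q ≤ (∑ j, w j * ‖f j - Ψ.mulVec a j‖) ^ q :=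
      Real.rpow_le_rpow hη.le h1 hq0.le
    exact h3.trans h2
  have hdw : η ^ q ≤ ⨅ a : Fin n → ℂ, ∑ j, w j * ‖f j - Ψ.mulVec a j‖ ^ q :=
    le_ciInf hlow
  have hdws := hwstarMax w hw0 hw1
  have hup : (⨅ a : Fin n → ℂ, ∑ j, wstar j * ‖f j - Ψ.mulVec a j‖ ^ q)
      ≤ ∑ j, wstar j * ‖f j - Ψ.mulVec astar j‖ ^ q := by
    refine ciInf_le ⟨0, ?_⟩ astar
    rintro x ⟨a, rfl⟩
    exact Finset.sum_nonneg fun j _ =>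
      mul_nonneg (hwstar0 j) (Real.rpow_nonneg (norm_nonneg _) q)
  have hup2 : ∑ j, wstar j * ‖f j - Ψ.mulVec astar j‖ ^ q
      ≤ ∑ j, wstar j * η ^ q :=
    Finset.sum_le_sum fun j _ => mul_le_mul_of_nonneg_left
      (Real.rpow_le_rpow (norm_nonneg _) (hAle j) hq0.le) (hwstar0 j)
  have hup3 : ∑ j, wstar j * η ^ q = η ^ q := by rw [← Finset.sum_mul, hwstar1, one_mul]
  have hkey : ∑ j, wstar j * ‖f j - Ψ.mulVec astar j‖ ^ q = η ^ q :=
    le_antisymm (hup2.trans hup3.le) ((hdw.trans hdws).trans hup)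
  have hEq : ∑ j, wstar j * (η ^ q - ‖f j - Ψ.mulVec astar j‖ ^ q) = 0 := by
    simp only [mul_sub, Finset.sum_sub_distrib, hup3, hkey, sub_self]
  have hterm0 := (Finset.sum_eq_zero_iff_of_nonneg (fun j _ =>
    mul_nonneg (hwstar0 j) (sub_nonneg.2
      (Real.rpow_le_rpow (norm_nonneg _) (hAle j) hq0.le)))).1 hEq
  intro j
  rcases eq_or_ne (wstar j) 0 with h | h
  · rw [h, zero_mul]
  · have hA : ‖f j - Ψ.mulVec astar j‖ = η := by
      by_contra hne
      have hlt : ‖f j - Ψ.mulVec astar j‖ < η := lt_of_le_of_ne (hAle j) hne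
      have hq' : ‖f j - Ψ.mulVec astar j‖ ^ q < η ^ q :=
        Real.rpow_lt_rpow (norm_nonneg _) hlt hq0
      rcases mul_eq_zero.1 (hterm0 j (Finset.mem_univ j)) with h' | h'
      · exact h h'
      · linarith [sub_eq_zero.1 h']
    rw [hA, sub_self, mul_zero]
end

section
/- (Support of dual maximizers, Theorem 2.1(1)) Assume n + 1 ≤ m, Ψ satisfies the discrete Haar condition, q ≥ 1, and η* > 0. Then every maximizer w* ∈ S of d_q over S has at least n + 1 nonzero entries. -/
open scoped BigOperators

/-- Support of dual maximizers (Theorem 2.1(1)): under the hypotheses `n + 1 ≤ m`,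
the discrete Haar condition, `q ≥ 1` and `η* > 0`, every maximizer `w* ∈ S` of `d_q`
over `S` has at least `n + 1` nonzero entries. -/
theorem dual_maximizer_support
    (m n : ℕ) (hm : 0 < m) (hn : 0 < n) (hnm : n + 1 ≤ m)
    (f : Fin m → ℂ) (Ψ : Matrix (Fin m) (Fin n) ℂ)
    (hHaar : ∀ ρ : Fin n → Fin m, Function.Injective ρ →
      IsUnit (Matrix.of fun i j => Ψ (ρ i) j : Matrix (Fin n) (Fin n) ℂ))
    (q : ℝ) (hq : 1 ≤ q)
    (hη : 0 < ⨅ a : Fin n → ℂ, ⨆ j, ‖f j - Ψ.mulVec a j‖)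
    (wstar : Fin m → ℝ) (hwstar0 : ∀ j, 0 ≤ wstar j) (hwstar1 : ∑ j, wstar j = 1)
    (hwstarMax : ∀ w : Fin m → ℝ, (∀ j, 0 ≤ w j) → ∑ j, w j = 1 →
      (⨅ a : Fin n → ℂ, ∑ j, w j * ‖f j - Ψ.mulVec a j‖ ^ q)
        ≤ ⨅ a : Fin n → ℂ, ∑ j, wstar j * ‖f j - Ψ.mulVec a j‖ ^ q) :
    n + 1 ≤ {j : Fin m | wstar j ≠ 0}.ncard := by
  by_contra hcon
  push_neg at hcon
  set S : Set (Fin m) := {j : Fin m | wstar j ≠ 0} with hSdef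
  have hScard : S.ncard ≤ n := Nat.lt_succ_iff.mp hcon
  have hSfin : S.Finite := Set.toFinite S
  -- extend the support to a set of exactly n rows
  obtain ⟨t, htsub, htcard⟩ :=
    Finset.exists_superset_card_eq (s := hSfin.toFinset) (n := n)
      (by rwa [← Set.ncard_eq_toFinset_card S hSfin])
      (by simpa using (Nat.le_of_succ_le hnm))
  let e : t ≃ Fin n := t.equivFinOfCardEq htcard
  let ρ : Fin n → Fin m := fun i => ((e.symm i : t) : Fin m)
  have hρinj : Function.Injective ρ := fun i j h =>
    e.symm.injective (Subtype.ext h)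
  set M : Matrix (Fin n) (Fin n) ℂ := Matrix.of fun i j => Ψ (ρ i) j with hMdef
  have hM : IsUnit M := hHaar ρ hρinj
  have hdet : IsUnit M.det := (Matrix.isUnit_iff_isUnit_det M).mp hM
  set a₀ : Fin n → ℂ := M⁻¹.mulVec (fun i => f (ρ i)) with ha₀def
  have hMa₀ : M.mulVec a₀ = fun i => f (ρ i) := by
    rw [ha₀def, Matrix.mulVec_mulVec, Matrix.mul_nonsing_inv _ hdet, Matrix.one_mulVec]
  -- residual vanishes on the support
  have hres : ∀ j ∈ S, Ψ.mulVec a₀ j = f j := by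
    intro j hj
    have hjt : j ∈ t := htsub (hSfin.mem_toFinset.mpr hj)
    have : ρ (e ⟨j, hjt⟩) = j := by simp [ρ]
    have h2 := congrFun hMa₀ (e ⟨j, hjt⟩)
    rw [← this]
    simpa [M, Matrix.mulVec, dotProduct] using h2
  -- hence d_q(wstar) ≤ 0
  have hzero : (∑ j, wstar j * ‖f j - Ψ.mulVec a₀ j‖ ^ q) = 0 := by
    apply Finset.sum_eq_zero
    intro j _
    by_cases hj : wstar j = 0
    · simp [hj]
    · have : f j - Ψ.mulVec a₀ j = 0 := by rw [hres j hj]; ring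
      rw [this]
      simp [Real.zero_rpow (by linarith : q ≠ 0)]
  have hbdd0 : BddBelow (Set.range fun a : Fin n → ℂ =>
      ∑ j, wstar j * ‖f j - Ψ.mulVec a j‖ ^ q) := by
    refine ⟨0, ?_⟩
    rintro x ⟨a, rfl⟩
    exact Finset.sum_nonneg fun j _ =>
      mul_nonneg (hwstar0 j) (Real.rpow_nonneg (norm_nonneg _) q)
  have hdq_le : (⨅ a : Fin n → ℂ, ∑ j, wstar j * ‖f j - Ψ.mulVec a j‖ ^ q) ≤ 0 :=
    le_of_le_of_eq (ciInf_le hbdd0 a₀) hzero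
  -- uniform weights give a positive lower bound
  set w : Fin m → ℝ := fun _ => 1 / m with hwdef
  have hw0 : ∀ j, 0 ≤ w j := fun j => by positivity
  have hw1 : ∑ j, w j = 1 := by
    simp [hwdef, Finset.sum_const, Finset.card_fin]
    field_simp
  set η : ℝ := ⨅ a : Fin n → ℂ, ⨆ j, ‖f j - Ψ.mulVec a j‖ with hηdef
  have hbddη : BddBelow (Set.range fun a : Fin n → ℂ =>
      ⨆ j, ‖f j - Ψ.mulVec a j‖) := by
    refine ⟨0, ?_⟩
    rintro x ⟨a, rfl⟩
    exact Real.iSup_nonneg fun j => norm_nonneg _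
  have hlow : (1 / m) * η ^ q ≤
      ⨅ a : Fin n → ℂ, ∑ j, w j * ‖f j - Ψ.mulVec a j‖ ^ q := by
    apply le_ciInf
    intro a
    haveI : Nonempty (Fin m) := ⟨⟨0, hm⟩⟩
    obtain ⟨j0, hj0⟩ := Finite.exists_max fun j => ‖f j - Ψ.mulVec a j‖
    have hsup : (⨆ j, ‖f j - Ψ.mulVec a j‖) ≤ ‖f j0 - Ψ.mulVec a j0‖ :=
      ciSup_le hj0
    have hηle : η ≤ ‖f j0 - Ψ.mulVec a j0‖ :=
      le_trans (ciInf_le hbddη a) hsup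
    have hpow : η ^ q ≤ ‖f j0 - Ψ.mulVec a j0‖ ^ q :=
      Real.rpow_le_rpow hη.le hηle (by linarith)
    calc (1 / m) * η ^ q ≤ (1 / m) * ‖f j0 - Ψ.mulVec a j0‖ ^ q := by
          apply mul_le_mul_of_nonneg_left hpow
          positivity
      _ = w j0 * ‖f j0 - Ψ.mulVec a j0‖ ^ q := rfl
      _ ≤ ∑ j, w j * ‖f j - Ψ.mulVec a j‖ ^ q := by
          apply Finset.single_le_sum (f := fun j => w j * ‖f j - Ψ.mulVec a j‖ ^ q)
          · intro j _
            exact mul_nonneg (hw0 j) (Real.rpow_nonneg (norm_nonneg _) q)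
          · exact Finset.mem_univ j0
  have hpos : 0 < (1 / m : ℝ) * η ^ q := by
    have : (0:ℝ) < m := by exact_mod_cast hm
    have := Real.rpow_pos_of_pos hη q
    positivity
  have := hwstarMax w hw0 hw1
  linarith [le_trans hlow (le_trans this hdq_le)]
end

section
/- (Theorem 2.1(2)) Assume n + 1 ≤ m, Ψ satisfies the discrete Haar condition, q > 1, and η* > 0. Let a* ∈ ℂ^n attain the minimax value, i.e. max_{1≤j≤m} |f_j − (Ψ a*)_j| = η*, and let w* ∈ S attain sup_{w ∈ S} d_q(w). Then a* is the unique minimizer over ℂ^n of the weighted problem a ↦ ∑_{j=1}^m w*_j |f_j − (Ψ a)_j|^q, and the minimum value equals d_q(w*) = (η*)^q. -/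
open scoped BigOperators


lemma aux_rpow_inj {x y q : ℝ} (hx : 0 ≤ x) (hy : 0 ≤ y) (hq : 0 < q)
    (h : x ^ q = y ^ q) : x = y := by
  rcases lt_trichotomy x y with hlt | he | hgt
  · exact absurd h (ne_of_lt (Real.rpow_lt_rpow hx hlt hq))
  · exact he
  · exact absurd h.symm (ne_of_lt (Real.rpow_lt_rpow hy hgt hq))

lemma aux_eq_of_abs_add {z w : ℂ} (h1 : ‖z‖ = ‖w‖)
    (h2 : ‖z + w‖ = ‖z‖ + ‖w‖) : z = w := by
  set c := ‖w‖ with hc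
  rcases eq_or_lt_of_le (norm_nonneg w) with h0 | h0
  · have hw : w = 0 := norm_eq_zero.mp h0.symm
    have hz : z = 0 := norm_eq_zero.mp (h1.trans h0.symm)
    rw [hz, hw]
  · have h0' : (0:ℝ) < c := by rw [hc]; exact h0
    have hsq : Complex.normSq (z + w) = (2 * c) ^ 2 := by
      have h3 : ‖z + w‖ = 2 * c := by rw [h2, h1]; ring
      rw [← Complex.sq_norm, h3]
    have hsz : Complex.normSq z = c ^ 2 := by rw [← Complex.sq_norm, h1]
    have hsw : Complex.normSq w = c ^ 2 := by rw [← Complex.sq_norm]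
    have hre : (z * (starRingEnd ℂ) w).re = c ^ 2 := by
      have := Complex.normSq_add z w
      rw [hsq, hsz, hsw] at this
      nlinarith
    have habs : ‖z * (starRingEnd ℂ) w‖ = c ^ 2 := by
      rw [norm_mul, Complex.norm_conj, h1, ← hc]; ring
    have him : (z * (starRingEnd ℂ) w).im = 0 := by
      have h3 : Complex.normSq (z * (starRingEnd ℂ) w) = (c^2)^2 := by
        rw [← Complex.sq_norm, habs]
      have h4 := Complex.normSq_apply (z * (starRingEnd ℂ) w)
      rw [h3, hre] at h4
      nlinarith
    have hzw : z * (starRingEnd ℂ) w = (c : ℂ) ^ 2 := by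
      apply Complex.ext
      · rw [hre]; simp [pow_two]
      · rw [him]; simp [pow_two]
    have h6 : (starRingEnd ℂ) w * w = (c : ℂ) ^ 2 := by
      rw [mul_comm, Complex.mul_conj, hsw]; push_cast; ring
    have h5 : (c : ℂ) ^ 2 * z = (c : ℂ) ^ 2 * w := by
      calc (c : ℂ) ^ 2 * z = z * ((starRingEnd ℂ) w * w) := by rw [h6]; ring
        _ = (z * (starRingEnd ℂ) w) * w := by ring
        _ = (c : ℂ) ^ 2 * w := by rw [hzw]
    have hc2 : ((c : ℂ) ^ 2) ≠ 0 :=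
      pow_ne_zero _ (Complex.ofReal_ne_zero.mpr (ne_of_gt h0'))
    exact mul_left_cancel₀ hc2 h5



lemma aux_separation {m : ℕ} (hm : 0 < m) {α : Type*} [Nonempty α]
    (g : α → Fin m → ℝ) (c : ℝ)
    (hconv : ∀ (a b : α) (t : ℝ), 0 ≤ t → t ≤ 1 →
      ∃ d, ∀ j, g d j ≤ t * g a j + (1 - t) * g b j)
    (hbig : ∀ a, ∃ j, c ≤ g a j) :
    ∃ w : Fin m → ℝ, (∀ j, 0 ≤ w j) ∧ ∑ j, w j = 1 ∧
      ∀ a, c ≤ ∑ j, w j * g a j := by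
  classical
  set S : Set (Fin m → ℝ) := {x | ∀ j, x j < c} with hS
  set T : Set (Fin m → ℝ) := {x | ∃ a, ∀ j, g a j ≤ x j} with hT
  have hSconv : Convex ℝ S := by
    have : S = ⋂ j, (fun x : Fin m → ℝ => x j) ⁻¹' Set.Iio c := by
      ext x; simp [hS]
    rw [this]
    exact convex_iInter fun j =>
      (convex_Iio c).is_linear_preimage (IsLinearMap.mk (fun x y => rfl) (fun r x => rfl))
  have hSopen : IsOpen S := by
    have : S = ⋂ j, (fun x : Fin m → ℝ => x j) ⁻¹' Set.Iio c := by
      ext x; simp [hS]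
    rw [this]
    exact isOpen_iInter_of_finite fun j => (continuous_apply j).isOpen_preimage _ isOpen_Iio
  have hTconv : Convex ℝ T := by
    rintro x ⟨a, ha⟩ y ⟨b, hb⟩ t s ht hs hts
    obtain ⟨d, hd⟩ := hconv a b t ht (by linarith)
    refine ⟨d, fun j => ?_⟩
    have h1 : s = 1 - t := by linarith
    have := hd j
    have hx := ha j
    have hy := hb j
    simp only [Pi.add_apply, Pi.smul_apply, smul_eq_mul]
    rw [h1] at *
    nlinarith
  have hdisj : Disjoint S T := by
    rw [Set.disjoint_left]
    rintro x hx ⟨a, ha⟩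
    obtain ⟨j, hj⟩ := hbig a
    exact absurd (lt_of_le_of_lt (hj.trans (ha j)) (hx j)) (lt_irrefl c)
  obtain ⟨φ, u, hφS, hφT⟩ := geometric_hahn_banach_open hSconv hSopen hTconv hdisj
  set w0 : Fin m → ℝ := fun j => φ (Pi.single j 1) with hw0
  have hkey : ∀ x : Fin m → ℝ, φ x = ∑ j, x j * w0 j := by
    intro x
    have hx : x = ∑ j, x j • (Pi.single j 1 : Fin m → ℝ) := by
      funext k
      simp [Finset.sum_apply, Pi.single_apply]
    calc φ x = φ (∑ j, x j • (Pi.single j 1 : Fin m → ℝ)) := by rw [← hx]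
      _ = ∑ j, x j * w0 j := by rw [map_sum]; simp [hw0]
  -- a base point of T
  set a0 : α := Classical.arbitrary α with ha0
  have hgT : ∀ a, g a ∈ T := fun a => ⟨a, fun j => le_refl _⟩
  have hu0 : u ≤ φ (g a0) := hφT _ (hgT a0)
  -- nonnegativity of w0
  have hw0nn : ∀ j, 0 ≤ w0 j := by
    intro j
    by_contra hneg
    push_neg at hneg
    set N : ℝ := (φ (g a0) - u + 1) / (-w0 j) with hN
    have hNpos : 0 ≤ N := by
      apply div_nonneg; linarith; linarith
    have hmem : g a0 + N • (Pi.single j 1 : Fin m → ℝ) ∈ T := by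
      refine ⟨a0, fun k => ?_⟩
      have : (0:ℝ) ≤ (N • (Pi.single j 1 : Fin m → ℝ)) k := by
        simp only [Pi.smul_apply, smul_eq_mul]
        rcases eq_or_ne k j with h | h <;> simp [Pi.single_apply, h, hNpos]
      simp only [Pi.add_apply]; linarith
    have h2 := hφT _ hmem
    rw [map_add, map_smul] at h2
    have h3 : φ (Pi.single j 1) = w0 j := rfl
    rw [smul_eq_mul, h3] at h2
    have h4 : N * w0 j = -(φ (g a0) - u + 1) := by
      have hne : -w0 j ≠ 0 := by linarith
      rw [hN, div_mul_eq_mul_div, div_eq_iff hne]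
      ring
    rw [h4] at h2
    linarith
  -- total weight positive
  set W : ℝ := ∑ j, w0 j with hW
  have hWnn : 0 ≤ W := Finset.sum_nonneg fun j _ => hw0nn j
  have hWpos : 0 < W := by
    rcases eq_or_lt_of_le hWnn with h0 | h0
    · exfalso
      have hall : ∀ j ∈ Finset.univ, w0 j = 0 :=
        (Finset.sum_eq_zero_iff_of_nonneg (fun j _ => hw0nn j)).mp h0.symm
      have hzero : ∀ x : Fin m → ℝ, φ x = 0 := by
        intro x; rw [hkey]; apply Finset.sum_eq_zero
        intro j hj; rw [hall j hj]; ring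
      have hSel : (fun _ : Fin m => c - 1) ∈ S := fun j => by simp
      have h1 := hφS _ hSel
      rw [hzero] at h1
      rw [hzero] at hu0
      linarith
    · exact h0
  -- bound: c * W ≤ u
  have hcu : c * W ≤ u := by
    have hlt : ∀ t' < c, t' * W < u := by
      intro t' ht'
      have hmem : (fun _ : Fin m => t') ∈ S := fun j => ht'
      have h := hφS _ hmem
      rw [hkey] at h
      have he : (∑ j : Fin m, (fun _ : Fin m => t') j * w0 j) = t' * W := by
        rw [hW, Finset.mul_sum]
      rwa [he] at h
    have : c ≤ u / W := by
      apply le_of_forall_lt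
      intro t' ht'
      exact (lt_div_iff₀ hWpos).mpr (hlt t' ht')
    calc c * W ≤ (u / W) * W := by nlinarith
      _ = u := by field_simp
  refine ⟨fun j => w0 j / W, fun j => div_nonneg (hw0nn j) hWnn, ?_, ?_⟩
  · rw [← Finset.sum_div, ← hW]; field_simp
  · intro a
    have h1 : u ≤ ∑ j, g a j * w0 j := by rw [← hkey]; exact hφT _ (hgT a)
    have h2 : (∑ j, w0 j / W * g a j) = (∑ j, g a j * w0 j) / W := by
      rw [Finset.sum_div]; apply Finset.sum_congr rfl; intro j _; ring
    rw [h2, le_div_iff₀ hWpos]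
    linarith

/-- Theorem 2.1(2): for `q > 1`, if `a*` attains the minimax value `η* > 0` and `w* ∈ S`
maximizes `d_q` over the simplex, then `a*` is the unique minimizer of the weighted
problem `a ↦ ∑_j w*_j |f_j − (Ψ a)_j|^q`, and the minimum value equals
`d_q(w*) = (η*)^q`. -/
theorem dual_weighted_unique_minimizer
    (m n : ℕ) (hm : 0 < m) (hn : 0 < n) (hnm : n + 1 ≤ m)
    (f : Fin m → ℂ) (Ψ : Matrix (Fin m) (Fin n) ℂ)
    (hHaar : ∀ ρ : Fin n → Fin m, Function.Injective ρ →
      IsUnit (Matrix.of fun i j => Ψ (ρ i) j : Matrix (Fin n) (Fin n) ℂ))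
    (q : ℝ) (hq : 1 < q)
    (hη : 0 < ⨅ a : Fin n → ℂ, ⨆ j, ‖f j - Ψ.mulVec a j‖)
    (astar : Fin n → ℂ)
    (hastar : (⨆ j, ‖f j - Ψ.mulVec astar j‖)
      = ⨅ a : Fin n → ℂ, ⨆ j, ‖f j - Ψ.mulVec a j‖)
    (wstar : Fin m → ℝ) (hwstar0 : ∀ j, 0 ≤ wstar j) (hwstar1 : ∑ j, wstar j = 1)
    (hwstarMax : ∀ w : Fin m → ℝ, (∀ j, 0 ≤ w j) → ∑ j, w j = 1 →
      (⨅ a : Fin n → ℂ, ∑ j, w j * ‖f j - Ψ.mulVec a j‖ ^ q)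
        ≤ ⨅ a : Fin n → ℂ, ∑ j, wstar j * ‖f j - Ψ.mulVec a j‖ ^ q) :
    (∀ a : Fin n → ℂ,
        (∑ j, wstar j * ‖f j - Ψ.mulVec astar j‖ ^ q)
          ≤ ∑ j, wstar j * ‖f j - Ψ.mulVec a j‖ ^ q)
    ∧ (∀ a : Fin n → ℂ,
        (∑ j, wstar j * ‖f j - Ψ.mulVec a j‖ ^ q)
          = (∑ j, wstar j * ‖f j - Ψ.mulVec astar j‖ ^ q) → a = astar)
    ∧ (∑ j, wstar j * ‖f j - Ψ.mulVec astar j‖ ^ q)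
        = (⨅ a : Fin n → ℂ, ∑ j, wstar j * ‖f j - Ψ.mulVec a j‖ ^ q)
    ∧ (⨅ a : Fin n → ℂ, ∑ j, wstar j * ‖f j - Ψ.mulVec a j‖ ^ q)
        = (⨅ a : Fin n → ℂ, ⨆ j, ‖f j - Ψ.mulVec a j‖) ^ q := by
  classical
  have hmNE : Nonempty (Fin m) := ⟨⟨0, hm⟩⟩
  have hq0 : (0:ℝ) < q := lt_trans zero_lt_one hq
  have hqne : q ≠ 0 := ne_of_gt hq0
  -- abbreviations (definitional)
  set G : (Fin n → ℂ) → ℝ := fun a => ⨆ j, ‖f j - Ψ.mulVec a j‖ with hGdef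
  set F : (Fin n → ℂ) → ℝ := fun a => ∑ j, wstar j * ‖f j - Ψ.mulVec a j‖ ^ q
    with hFdef
  set η : ℝ := ⨅ a, G a with hηdef
  -- basic positivity facts
  have habs_nn : ∀ (a : Fin n → ℂ) (j : Fin m), 0 ≤ ‖f j - Ψ.mulVec a j‖ :=
    fun a j => norm_nonneg _
  have habs_le_G : ∀ (a : Fin n → ℂ) (j : Fin m),
      ‖f j - Ψ.mulVec a j‖ ≤ G a := by
    intro a j
    simp only [hGdef]
    exact le_ciSup (Finite.bddAbove_range fun j => ‖f j - Ψ.mulVec a j‖) j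
  have hG_nn : ∀ a, 0 ≤ G a := fun a => le_trans (habs_nn a ⟨0, hm⟩) (habs_le_G a ⟨0, hm⟩)
  have hη_le_G : ∀ a, η ≤ G a := by
    intro a
    rw [hηdef]
    refine ciInf_le ⟨0, ?_⟩ a
    rintro x ⟨a', rfl⟩
    exact hG_nn a'
  have hFnn : ∀ a, 0 ≤ F a := fun a =>
    Finset.sum_nonneg fun j _ =>
      mul_nonneg (hwstar0 j) (Real.rpow_nonneg (habs_nn a j) q)
  have hinf_le_F : ∀ a, (⨅ a, F a) ≤ F a := by
    intro a
    refine ciInf_le ⟨0, ?_⟩ a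
    rintro x ⟨a', rfl⟩
    exact hFnn a'
  -- the maximal residual exceeds η, in q-th powers
  have hbig : ∀ a : Fin n → ℂ, ∃ j, η ^ q ≤ ‖f j - Ψ.mulVec a j‖ ^ q := by
    intro a
    obtain ⟨j0, hj0⟩ := Finite.exists_max fun j => ‖f j - Ψ.mulVec a j‖
    refine ⟨j0, Real.rpow_le_rpow (le_of_lt hη) ?_ (le_of_lt hq0)⟩
    exact le_trans (hη_le_G a) (ciSup_le hj0)
  -- convexity of the residual powers
  have hconv : ∀ (a b : Fin n → ℂ) (t : ℝ), 0 ≤ t → t ≤ 1 →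
      ∃ d, ∀ j, ‖f j - Ψ.mulVec d j‖ ^ q
        ≤ t * ‖f j - Ψ.mulVec a j‖ ^ q
          + (1 - t) * ‖f j - Ψ.mulVec b j‖ ^ q := by
    intro a b t ht ht1
    refine ⟨(t : ℂ) • a + ((1 - t : ℝ) : ℂ) • b, fun j => ?_⟩
    have hres : f j - Ψ.mulVec ((t : ℂ) • a + ((1 - t : ℝ) : ℂ) • b) j
        = (t : ℂ) * (f j - Ψ.mulVec a j) + ((1 - t : ℝ) : ℂ) * (f j - Ψ.mulVec b j) := by
      rw [Matrix.mulVec_add, Matrix.mulVec_smul, Matrix.mulVec_smul]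
      simp only [Pi.add_apply, Pi.smul_apply, smul_eq_mul]
      push_cast
      ring
    have habs1 : ‖f j - Ψ.mulVec ((t : ℂ) • a + ((1 - t : ℝ) : ℂ) • b) j‖
        ≤ t * ‖f j - Ψ.mulVec a j‖ + (1 - t) * ‖f j - Ψ.mulVec b j‖ := by
      rw [hres]
      refine le_trans (norm_add_le _ _) ?_
      rw [norm_mul, norm_mul, Complex.norm_of_nonneg ht,
        Complex.norm_of_nonneg (by linarith : (0:ℝ) ≤ 1 - t)]
    set s1 := ‖f j - Ψ.mulVec a j‖
    set s2 := ‖f j - Ψ.mulVec b j‖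
    have h1 : ‖f j - Ψ.mulVec ((t : ℂ) • a + ((1 - t : ℝ) : ℂ) • b) j‖ ^ q
        ≤ (t * s1 + (1 - t) * s2) ^ q :=
      Real.rpow_le_rpow (habs_nn _ j) habs1 (le_of_lt hq0)
    have h2 : (t * s1 + (1 - t) * s2) ^ q ≤ t * s1 ^ q + (1 - t) * s2 ^ q := by
      have := (convexOn_rpow (le_of_lt hq)).2 (Set.mem_Ici.mpr (habs_nn a j))
        (Set.mem_Ici.mpr (habs_nn b j)) ht (show (0:ℝ) ≤ 1 - t by linarith)
        (show t + (1 - t) = 1 by ring)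
      simpa [smul_eq_mul] using this
    exact le_trans h1 h2
  -- separation: a weight vector achieving η^q
  obtain ⟨w, hw0, hw1, hwge⟩ := aux_separation hm
    (fun (a : Fin n → ℂ) (j : Fin m) => ‖f j - Ψ.mulVec a j‖ ^ q)
    (η ^ q) hconv hbig
  -- lower bound for the optimal weighted value
  have hlow : η ^ q ≤ ⨅ a, F a := by
    refine le_trans (le_ciInf fun a => hwge a) (hwstarMax w hw0 hw1)
  -- upper bound at astar
  have hupp : F astar ≤ η ^ q := by
    have h1 : ∀ j ∈ Finset.univ, wstar j * ‖f j - Ψ.mulVec astar j‖ ^ q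
        ≤ wstar j * η ^ q := by
      intro j _
      refine mul_le_mul_of_nonneg_left ?_ (hwstar0 j)
      refine Real.rpow_le_rpow (habs_nn astar j) ?_ (le_of_lt hq0)
      rw [← hastar]
      exact le_ciSup (Finite.bddAbove_range fun j => ‖f j - Ψ.mulVec astar j‖) j
    calc F astar ≤ ∑ j, wstar j * η ^ q := Finset.sum_le_sum h1
      _ = η ^ q := by rw [← Finset.sum_mul, hwstar1, one_mul]
  have hFinf : (⨅ a, F a) = η ^ q :=
    le_antisymm (le_trans (hinf_le_F astar) hupp) hlow
  have hFstar : F astar = η ^ q :=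
    le_antisymm hupp (le_trans hlow (hinf_le_F astar))
  -- support of wstar has at least n elements
  have hsupp : n ≤ (Finset.univ.filter fun j => wstar j ≠ 0).card := by
    by_contra hlt
    push_neg at hlt
    obtain ⟨Tset, hsub, hTcard⟩ := Finset.exists_superset_card_eq (le_of_lt hlt)
      (by simpa using le_trans (Nat.le_succ n) hnm)
    set e := Tset.equivFinOfCardEq hTcard with he
    set ρ : Fin n → Fin m := fun i => (e.symm i : Fin m) with hρ
    have hρinj : Function.Injective ρ :=
      fun i j hij => e.symm.injective (Subtype.ext hij)
    set M : Matrix (Fin n) (Fin n) ℂ := Matrix.of fun i j => Ψ (ρ i) j with hM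
    have hdet : IsUnit M.det := (Matrix.isUnit_iff_isUnit_det M).mp (hHaar ρ hρinj)
    set a0 : Fin n → ℂ := M⁻¹.mulVec fun i => f (ρ i) with ha0
    have hsolveM : M.mulVec a0 = fun i => f (ρ i) := by
      rw [ha0, Matrix.mulVec_mulVec, Matrix.mul_nonsing_inv _ hdet, Matrix.one_mulVec]
    have hsolve : ∀ i, Ψ.mulVec a0 (ρ i) = f (ρ i) := by
      intro i
      have h2 : Ψ.mulVec a0 (ρ i) = M.mulVec a0 i := rfl
      rw [h2, hsolveM]
    have hFa0 : F a0 = 0 := by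
      refine Finset.sum_eq_zero fun j _ => ?_
      rcases eq_or_ne (wstar j) 0 with h | h
      · rw [h, zero_mul]
      · have hjT : j ∈ Tset := hsub (Finset.mem_filter.mpr ⟨Finset.mem_univ j, h⟩)
        have hrj : Ψ.mulVec a0 j = f j := by
          have h12 := hsolve (e ⟨j, hjT⟩)
          simp only [hρ, Equiv.symm_apply_apply] at h12
          exact h12
        rw [hrj]
        simp [Real.zero_rpow hqne]
    have h3 : (0:ℝ) < η ^ q := Real.rpow_pos_of_pos hη q
    have h4 := hinf_le_F a0
    rw [hFinf, hFa0] at h4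
    linarith
  refine ⟨?_, ?_, ?_, ?_⟩
  · -- astar is a minimizer
    intro a
    calc F astar = ⨅ a, F a := hFstar.trans hFinf.symm
      _ ≤ F a := hinf_le_F a
  · -- uniqueness
    intro a ha
    have hFa : F a = η ^ q := ha.trans hFstar
    set b : Fin n → ℂ := (2 : ℂ)⁻¹ • (a + astar) with hb
    have hresb : ∀ j, f j - Ψ.mulVec b j
        = ((f j - Ψ.mulVec a j) + (f j - Ψ.mulVec astar j)) / 2 := by
      intro j
      rw [hb, Matrix.mulVec_smul, Matrix.mulVec_add]
      simp only [Pi.smul_apply, Pi.add_apply, smul_eq_mul]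
      field_simp
      ring
    -- notation for residual moduli
    have hub : ∀ j, ‖f j - Ψ.mulVec b j‖
        ≤ (‖f j - Ψ.mulVec a j‖ + ‖f j - Ψ.mulVec astar j‖) / 2 := by
      intro j
      rw [hresb j, norm_div, Complex.norm_two]
      gcongr
      exact norm_add_le _ _
    -- the three sums
    have hAB : ∀ j ∈ Finset.univ,
        wstar j * ‖f j - Ψ.mulVec b j‖ ^ q
        ≤ wstar j * ((‖f j - Ψ.mulVec a j‖
            + ‖f j - Ψ.mulVec astar j‖) / 2) ^ q := by
      intro j _
      exact mul_le_mul_of_nonneg_left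
        (Real.rpow_le_rpow (habs_nn b j) (hub j) (le_of_lt hq0)) (hwstar0 j)
    have hBC : ∀ j ∈ Finset.univ,
        wstar j * ((‖f j - Ψ.mulVec a j‖
            + ‖f j - Ψ.mulVec astar j‖) / 2) ^ q
        ≤ wstar j * ((‖f j - Ψ.mulVec a j‖ ^ q
            + ‖f j - Ψ.mulVec astar j‖ ^ q) / 2) := by
      intro j _
      refine mul_le_mul_of_nonneg_left ?_ (hwstar0 j)
      have := (convexOn_rpow (le_of_lt hq)).2 (Set.mem_Ici.mpr (habs_nn a j))
        (Set.mem_Ici.mpr (habs_nn astar j)) (by norm_num : (0:ℝ) ≤ 1/2)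
        (by norm_num : (0:ℝ) ≤ 1/2) (by norm_num)
      simp only [smul_eq_mul] at this
      calc ((‖f j - Ψ.mulVec a j‖ + ‖f j - Ψ.mulVec astar j‖) / 2) ^ q
          = (1/2 * ‖f j - Ψ.mulVec a j‖
            + 1/2 * ‖f j - Ψ.mulVec astar j‖) ^ q := by ring_nf
        _ ≤ 1/2 * ‖f j - Ψ.mulVec a j‖ ^ q
            + 1/2 * ‖f j - Ψ.mulVec astar j‖ ^ q := this
        _ = (‖f j - Ψ.mulVec a j‖ ^ q
            + ‖f j - Ψ.mulVec astar j‖ ^ q) / 2 := by ring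
    have hCval : (∑ j, wstar j * ((‖f j - Ψ.mulVec a j‖ ^ q
        + ‖f j - Ψ.mulVec astar j‖ ^ q) / 2)) = η ^ q := by
      have hsplit : (∑ j, wstar j * ((‖f j - Ψ.mulVec a j‖ ^ q
          + ‖f j - Ψ.mulVec astar j‖ ^ q) / 2)) = (F a + F astar) / 2 := by
        rw [hFdef]
        rw [← Finset.sum_add_distrib, Finset.sum_div]
        refine Finset.sum_congr rfl fun j _ => by ring
      rw [hsplit, hFa, hFstar]
      ring
    have hA : η ^ q ≤ ∑ j, wstar j * ‖f j - Ψ.mulVec b j‖ ^ q := by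
      have := hinf_le_F b
      rw [hFinf] at this
      exact this
    -- squeeze
    have hsum1 : (∑ j, wstar j * ‖f j - Ψ.mulVec b j‖ ^ q)
        = ∑ j, wstar j * ((‖f j - Ψ.mulVec a j‖
            + ‖f j - Ψ.mulVec astar j‖) / 2) ^ q := by
      refine le_antisymm (Finset.sum_le_sum hAB) ?_
      calc (∑ j, wstar j * ((‖f j - Ψ.mulVec a j‖
            + ‖f j - Ψ.mulVec astar j‖) / 2) ^ q)
          ≤ ∑ j, wstar j * ((‖f j - Ψ.mulVec a j‖ ^ q
            + ‖f j - Ψ.mulVec astar j‖ ^ q) / 2) := Finset.sum_le_sum hBC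
        _ = η ^ q := hCval
        _ ≤ _ := hA
    have hsum2 : (∑ j, wstar j * ((‖f j - Ψ.mulVec a j‖
            + ‖f j - Ψ.mulVec astar j‖) / 2) ^ q)
        = ∑ j, wstar j * ((‖f j - Ψ.mulVec a j‖ ^ q
            + ‖f j - Ψ.mulVec astar j‖ ^ q) / 2) := by
      refine le_antisymm (Finset.sum_le_sum hBC) ?_
      rw [hCval, ← hsum1]
      exact hA
    -- pointwise equalities on the support
    have hpt1 := (Finset.sum_eq_sum_iff_of_le hAB).mp hsum1
    have hpt2 := (Finset.sum_eq_sum_iff_of_le hBC).mp hsum2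
    -- on the support, residuals agree
    have hkey : ∀ j, wstar j ≠ 0 → Ψ.mulVec a j = Ψ.mulVec astar j := by
      intro j hj
      have hwpos : 0 < wstar j := lt_of_le_of_ne (hwstar0 j) (Ne.symm hj)
      set z := f j - Ψ.mulVec a j with hz
      set w' := f j - Ψ.mulVec astar j with hw'
      have he2 : ((‖z‖ + ‖w'‖) / 2) ^ q
          = (‖z‖ ^ q + ‖w'‖ ^ q) / 2 :=
        mul_left_cancel₀ hj (hpt2 j (Finset.mem_univ j))
      have hst : ‖z‖ = ‖w'‖ := by
        by_contra hne
        have := (strictConvexOn_rpow hq).2 (Set.mem_Ici.mpr (habs_nn a j))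
          (Set.mem_Ici.mpr (habs_nn astar j)) hne
          (by norm_num : (0:ℝ) < 1/2) (by norm_num : (0:ℝ) < 1/2) (by norm_num)
        simp only [smul_eq_mul] at this
        have heq : (1/2 * ‖z‖ + 1/2 * ‖w'‖) ^ q
            = 1/2 * ‖z‖ ^ q + 1/2 * ‖w'‖ ^ q := by
          calc (1/2 * ‖z‖ + 1/2 * ‖w'‖) ^ q
              = ((‖z‖ + ‖w'‖) / 2) ^ q := by ring_nf
            _ = (‖z‖ ^ q + ‖w'‖ ^ q) / 2 := he2
            _ = 1/2 * ‖z‖ ^ q + 1/2 * ‖w'‖ ^ q := by ring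
        exact absurd heq (ne_of_lt this)
      have he1 : ‖f j - Ψ.mulVec b j‖ ^ q
          = ((‖z‖ + ‖w'‖) / 2) ^ q :=
        mul_left_cancel₀ hj (hpt1 j (Finset.mem_univ j))
      have hu : ‖f j - Ψ.mulVec b j‖ = (‖z‖ + ‖w'‖) / 2 :=
        aux_rpow_inj (habs_nn b j) (div_nonneg (add_nonneg (norm_nonneg _) (norm_nonneg _)) (by norm_num)) hq0 he1
      have htri : ‖z + w'‖ = ‖z‖ + ‖w'‖ := by
        have h5 : ‖f j - Ψ.mulVec b j‖ = ‖z + w'‖ / 2 := by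
          rw [hresb j, norm_div, Complex.norm_two]
        rw [h5] at hu
        linarith
      have h9 := aux_eq_of_abs_add hst htri
      rw [hz, hw'] at h9
      linear_combination -h9
    -- kernel argument via the Haar condition
    obtain ⟨Tset, hsub, hTcard⟩ := Finset.exists_subset_card_eq hsupp
    set e := Tset.equivFinOfCardEq hTcard with he
    set ρ : Fin n → Fin m := fun i => (e.symm i : Fin m) with hρ
    have hρinj : Function.Injective ρ := fun i j hij => e.symm.injective (Subtype.ext hij)
    set M : Matrix (Fin n) (Fin n) ℂ := Matrix.of fun i j => Ψ (ρ i) j with hM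
    have hdet : IsUnit M.det := (Matrix.isUnit_iff_isUnit_det M).mp (hHaar ρ hρinj)
    have hMv : M.mulVec (a - astar) = 0 := by
      funext i
      have h6 : M.mulVec (a - astar) i = Ψ.mulVec (a - astar) (ρ i) := rfl
      have h7 : ρ i ∈ Tset := (e.symm i).2
      have h8 : wstar (ρ i) ≠ 0 := (Finset.mem_filter.mp (hsub h7)).2
      rw [h6, Matrix.mulVec_sub]
      simp [Pi.sub_apply, hkey _ h8]
    have hv0 : a - astar = 0 := by
      have h10 : M⁻¹.mulVec (M.mulVec (a - astar)) = a - astar := by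
        rw [Matrix.mulVec_mulVec, Matrix.nonsing_inv_mul _ hdet, Matrix.one_mulVec]
      rw [← h10, hMv, Matrix.mulVec_zero]
    exact sub_eq_zero.mp hv0
  · exact hFstar.trans hFinf.symm
  · exact hFinf
end

section
/- (Uniqueness of the weighted L_q minimizer) Assume Ψ satisfies the discrete Haar condition and q > 1. Let w ∈ ℝ^m with w_j ≥ 0 for all j have at least n + 1 strictly positive entries, and suppose inf_{a ∈ ℂ^n} ∑_{j=1}^m w_j |f_j − (Ψ a)_j|^q > 0. Then this infimum is attained at exactly one point a ∈ ℂ^n. -/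
open scoped BigOperators


lemma midpoint_rpow_le {q : ℝ} (hq : 1 < q) (z₁ z₂ : ℂ) :
    ‖(z₁ + z₂) / 2‖ ^ q
      ≤ (‖z₁‖ ^ q + ‖z₂‖ ^ q) / 2 := by
  have hq0 : (0:ℝ) < q := lt_trans one_pos hq
  have hconv := (strictConvexOn_rpow hq).convexOn
  have h1 : ‖(z₁ + z₂) / 2‖ ≤ (‖z₁‖ + ‖z₂‖) / 2 := by
    rw [norm_div]
    simp only [Complex.norm_two]
    gcongr
    exact norm_add_le z₁ z₂
  have h2 : ‖(z₁ + z₂) / 2‖ ^ q ≤ ((‖z₁‖ + ‖z₂‖) / 2) ^ q :=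
    Real.rpow_le_rpow (norm_nonneg _) h1 hq0.le
  refine h2.trans ?_
  have := hconv.2 (Set.mem_Ici.2 (norm_nonneg z₁)) (Set.mem_Ici.2 (norm_nonneg z₂))
    (by norm_num : (0:ℝ) ≤ 1/2) (by norm_num : (0:ℝ) ≤ 1/2) (by norm_num)
  simp only [smul_eq_mul] at this
  calc ((‖z₁‖ + ‖z₂‖) / 2) ^ q
      = (1/2 * ‖z₁‖ + 1/2 * ‖z₂‖) ^ q := by ring_nf
    _ ≤ 1/2 * ‖z₁‖ ^ q + 1/2 * ‖z₂‖ ^ q := this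
    _ = (‖z₁‖ ^ q + ‖z₂‖ ^ q) / 2 := by ring

lemma midpoint_rpow_lt {q : ℝ} (hq : 1 < q) {z₁ z₂ : ℂ} (h : z₁ ≠ z₂) :
    ‖(z₁ + z₂) / 2‖ ^ q
      < (‖z₁‖ ^ q + ‖z₂‖ ^ q) / 2 := by
  have hq0 : (0:ℝ) < q := lt_trans one_pos hq
  by_cases habs : ‖z₁‖ = ‖z₂‖
  · -- equal norms: not same ray, strict triangle inequality
    have hray : ¬ SameRay ℝ z₁ z₂ := by
      intro hray
      have := hray.norm_smul_eq
      simp only [habs] at this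
      have hz₂0 : z₂ ≠ 0 := by
        intro h0
        apply h
        rw [h0] at habs ⊢
        simpa using norm_eq_zero.1 (by simpa using habs)
      have hpos : (0:ℝ) < ‖z₂‖ := norm_pos_iff.2 hz₂0
      exact h ((smul_right_injective ℂ hpos.ne' this).symm)
    have h1 : ‖z₁ + z₂‖ < ‖z₁‖ + ‖z₂‖ := by
      simpa using norm_add_lt_of_not_sameRay hray
    have h2 : ‖(z₁ + z₂)/2‖ < (‖z₁‖ + ‖z₂‖) / 2 := by
      rw [norm_div]; simp only [Complex.norm_two]; linarith
    have h3 := Real.rpow_lt_rpow (norm_nonneg _) h2 hq0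
    refine h3.trans_le ?_
    have hconv := (strictConvexOn_rpow hq).convexOn
    have := hconv.2 (Set.mem_Ici.2 (norm_nonneg z₁)) (Set.mem_Ici.2 (norm_nonneg z₂))
      (by norm_num : (0:ℝ) ≤ 1/2) (by norm_num : (0:ℝ) ≤ 1/2) (by norm_num)
    simp only [smul_eq_mul] at this
    calc ((‖z₁‖ + ‖z₂‖) / 2) ^ q
        = (1/2 * ‖z₁‖ + 1/2 * ‖z₂‖) ^ q := by ring_nf
      _ ≤ 1/2 * ‖z₁‖ ^ q + 1/2 * ‖z₂‖ ^ q := this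
      _ = (‖z₁‖ ^ q + ‖z₂‖ ^ q) / 2 := by ring
  · -- distinct norms: strict convexity of rpow
    have h1 : ‖(z₁ + z₂) / 2‖ ≤ (‖z₁‖ + ‖z₂‖) / 2 := by
      rw [norm_div]; simp only [Complex.norm_two]
      gcongr; exact norm_add_le z₁ z₂
    have h2 := Real.rpow_le_rpow (norm_nonneg _) h1 hq0.le
    refine h2.trans_lt ?_
    have := (strictConvexOn_rpow hq).2 (Set.mem_Ici.2 (norm_nonneg z₁))
      (Set.mem_Ici.2 (norm_nonneg z₂)) habs
      (by norm_num : (0:ℝ) < 1/2) (by norm_num : (0:ℝ) < 1/2) (by norm_num)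
    simp only [smul_eq_mul] at this
    calc ((‖z₁‖ + ‖z₂‖) / 2) ^ q
        = (1/2 * ‖z₁‖ + 1/2 * ‖z₂‖) ^ q := by ring_nf
      _ < 1/2 * ‖z₁‖ ^ q + 1/2 * ‖z₂‖ ^ q := this
      _ = (‖z₁‖ ^ q + ‖z₂‖ ^ q) / 2 := by ring

open scoped BigOperators


/-- Uniqueness of the weighted `L_q` minimizer: if `Ψ` satisfies the discrete Haar
condition, `q > 1`, `w ≥ 0` has at least `n + 1` strictly positive entries, and the
infimum of the weighted objective is positive, then the infimum is attained at exactly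
one point `a ∈ ℂ^n`. -/
theorem weighted_minimizer_unique
    (m n : ℕ) (hn : 0 < n) (hnm : n + 1 ≤ m)
    (f : Fin m → ℂ) (Ψ : Matrix (Fin m) (Fin n) ℂ)
    (hHaar : ∀ ρ : Fin n → Fin m, Function.Injective ρ →
      IsUnit (Matrix.of fun i j => Ψ (ρ i) j : Matrix (Fin n) (Fin n) ℂ))
    (q : ℝ) (hq : 1 < q)
    (w : Fin m → ℝ) (hw0 : ∀ j, 0 ≤ w j)
    (hsupp : n + 1 ≤ {j : Fin m | 0 < w j}.ncard)
    (hpos : 0 < ⨅ a : Fin n → ℂ, ∑ j, w j * ‖f j - Ψ.mulVec a j‖ ^ q) :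
    ∃! a : Fin n → ℂ,
      (∑ j, w j * ‖f j - Ψ.mulVec a j‖ ^ q)
        = ⨅ a' : Fin n → ℂ, ∑ j, w j * ‖f j - Ψ.mulVec a' j‖ ^ q := by
  classical
  have hq0 : (0:ℝ) < q := lt_trans one_pos hq
  set F : (Fin n → ℂ) → ℝ := fun a => ∑ j, w j * ‖f j - Ψ.mulVec a j‖ ^ q
    with hFdef
  have hF0 : ∀ a, 0 ≤ F a := fun a => Finset.sum_nonneg fun j _ =>
    mul_nonneg (hw0 j) (Real.rpow_nonneg (norm_nonneg _) q)
  have hbdd : BddBelow (Set.range F) := ⟨0, by rintro x ⟨a, rfl⟩; exact hF0 a⟩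
  -- choose n rows with positive weights
  set s : Finset (Fin m) := Finset.univ.filter (fun j => 0 < w j) with hs
  have hscard : n ≤ s.card := by
    have hcoe : {j : Fin m | 0 < w j} = (↑s : Set (Fin m)) := by
      ext j; simp [hs]
    rw [hcoe, Set.ncard_coe_finset] at hsupp
    omega
  obtain ⟨t, hts, htcard⟩ := Finset.exists_subset_card_eq hscard
  have e := t.equivFinOfCardEq htcard
  set ρ : Fin n → Fin m := fun i => (e.symm i : Fin m) with hρ
  have hρinj : Function.Injective ρ :=
    fun i i' h => e.symm.injective (Subtype.ext h)
  have hρw : ∀ i, 0 < w (ρ i) := by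
    intro i
    have : ρ i ∈ s := hts (e.symm i).2
    simpa [hs] using this
  set M : Matrix (Fin n) (Fin n) ℂ := Matrix.of fun i j => Ψ (ρ i) j with hM
  have hMunit : IsUnit M := hHaar ρ hρinj
  have hMdet : IsUnit M.det := (Matrix.isUnit_iff_isUnit_det M).1 hMunit
  have hMinv : M⁻¹ * M = 1 := Matrix.nonsing_inv_mul M hMdet
  have hMv : ∀ (v : Fin n → ℂ) (i : Fin n), M.mulVec v i = Ψ.mulVec v (ρ i) :=
    fun v i => rfl
  have hrec : ∀ v : Fin n → ℂ, M⁻¹.mulVec (M.mulVec v) = v := fun v => by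
    rw [Matrix.mulVec_mulVec, hMinv, Matrix.one_mulVec]
  have hker : ∀ v : Fin n → ℂ, M.mulVec v = 0 → v = 0 := fun v hv => by
    rw [← hrec v, hv, Matrix.mulVec_zero]
  -- separation
  have hsep : ∀ a b : Fin n → ℂ, a ≠ b →
      ∃ j, 0 < w j ∧ Ψ.mulVec a j ≠ Ψ.mulVec b j := by
    intro a b hab
    by_contra hcon
    push_neg at hcon
    apply hab
    have hz : M.mulVec (a - b) = 0 := by
      funext i
      rw [Matrix.mulVec_sub]
      show M.mulVec a i - M.mulVec b i = 0
      rw [hMv, hMv, hcon (ρ i) (hρw i), sub_self]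
    exact sub_eq_zero.1 (hker _ hz)
  -- strict convexity at midpoints
  have hmid : ∀ a b : Fin n → ℂ, a ≠ b →
      F ((1/2 : ℂ) • (a + b)) < (F a + F b)/2 := by
    intro a b hab
    obtain ⟨j₀, hj₀w, hj₀ne⟩ := hsep a b hab
    have hterm : ∀ j, f j - Ψ.mulVec ((1/2:ℂ) • (a+b)) j
        = ((f j - Ψ.mulVec a j) + (f j - Ψ.mulVec b j))/2 := by
      intro j
      rw [Matrix.mulVec_smul, Matrix.mulVec_add]
      simp only [Pi.smul_apply, Pi.add_apply, smul_eq_mul]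
      ring
    calc F ((1/2 : ℂ) • (a + b))
        = ∑ j, w j * ‖((f j - Ψ.mulVec a j) + (f j - Ψ.mulVec b j))/2‖ ^ q := by
          simp only [hFdef]
          exact Finset.sum_congr rfl fun j _ => by rw [hterm]
      _ < ∑ j, w j * ((‖f j - Ψ.mulVec a j‖ ^ q
            + ‖f j - Ψ.mulVec b j‖ ^ q)/2) := by
          apply Finset.sum_lt_sum
          · intro j _
            exact mul_le_mul_of_nonneg_left (midpoint_rpow_le hq _ _) (hw0 j)
          · refine ⟨j₀, Finset.mem_univ _, ?_⟩
            refine mul_lt_mul_of_pos_left (midpoint_rpow_lt hq ?_) hj₀w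
            intro hc
            exact hj₀ne (by have := sub_right_injective hc; simpa using hc)
      _ = (F a + F b)/2 := by
          simp only [hFdef]
          rw [← Finset.sum_add_distrib, Finset.sum_div]
          exact Finset.sum_congr rfl fun j _ => by ring
  -- continuity
  have hFc : Continuous F := by
    apply continuous_finset_sum
    intro j _
    apply Continuous.mul continuous_const
    apply Continuous.rpow_const
    · apply continuous_norm.comp
      apply Continuous.sub continuous_const
      have hrepr : (fun a : Fin n → ℂ => Ψ.mulVec a j) = fun a => ∑ k, Ψ j k * a k := rfl
      rw [hrepr]
      exact continuous_finset_sum _ fun k _ => continuous_const.mul (continuous_apply k)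
    · exact fun _ => Or.inr hq0.le
  -- coercivity
  set g : (Fin n → ℂ) →L[ℂ] (Fin n → ℂ) :=
    LinearMap.toContinuousLinearMap (Matrix.mulVecLin M⁻¹) with hg
  set K : ℝ := ‖g‖ + 1 with hK
  have hKpos : 0 < K := by positivity
  have hKa : ∀ a : Fin n → ℂ, ‖a‖ ≤ K * ‖M.mulVec a‖ := by
    intro a
    have h1 : g (M.mulVec a) = a := by
      simp only [hg, LinearMap.coe_toContinuousLinearMap', Matrix.mulVecLin_apply]
      exact hrec a
    calc ‖a‖ = ‖g (M.mulVec a)‖ := by rw [h1]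
      _ ≤ ‖g‖ * ‖M.mulVec a‖ := g.le_opNorm _
      _ ≤ K * ‖M.mulVec a‖ := by
          apply mul_le_mul_of_nonneg_right _ (norm_nonneg _)
          simp [hK]
  set fρ : Fin n → ℂ := fun i => f (ρ i) with hfρ
  set C₀ : ℝ := ‖fρ‖ with hC₀
  have hne : (Finset.univ : Finset (Fin n)).Nonempty := ⟨⟨0, hn⟩, Finset.mem_univ _⟩
  set w₀ : ℝ := Finset.univ.inf' hne (fun i => w (ρ i)) with hw₀
  have hw₀pos : 0 < w₀ := by
    rw [hw₀, Finset.lt_inf'_iff]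
    exact fun i _ => hρw i
  have hw₀le : ∀ i, w₀ ≤ w (ρ i) := fun i => Finset.inf'_le _ (Finset.mem_univ i)
  have hlower : ∀ a : Fin n → ℂ, w₀ * (max 0 (‖a‖/K - C₀)) ^ q ≤ F a := by
    intro a
    set u : Fin n → ℂ := fun i => f (ρ i) - Ψ.mulVec a (ρ i) with hu
    rcases le_or_gt (‖a‖/K - C₀) 0 with hle | hlt
    · rw [max_eq_left hle, Real.zero_rpow hq0.ne', mul_zero]
      exact hF0 a
    · rw [max_eq_right hlt.le]
      have hMa : M.mulVec a = fρ - u := by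
        funext i
        simp only [Pi.sub_apply, hu, hfρ, hMv]
        ring
      have h1 : ‖a‖/K ≤ ‖M.mulVec a‖ := (div_le_iff₀ hKpos).2 (by rw [mul_comm]; exact hKa a)
      have h2 : ‖M.mulVec a‖ ≤ C₀ + ‖u‖ := by
        rw [hMa, hC₀]; exact norm_sub_le _ _
      have h3 : ‖a‖/K - C₀ ≤ ‖u‖ := by linarith
      obtain ⟨i₀, _, hi₀⟩ := Finset.exists_max_image Finset.univ
        (fun i => ‖u i‖) hne
      have hnorm : ‖u‖ ≤ ‖u i₀‖ :=
        (pi_norm_le_iff_of_nonneg (norm_nonneg _)).2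
          (fun i => hi₀ i (Finset.mem_univ i))
      have h4 : (‖a‖/K - C₀) ^ q ≤ ‖u i₀‖ ^ q :=
        Real.rpow_le_rpow hlt.le (h3.trans hnorm) hq0.le
      have hsum : ∑ i : Fin n, w (ρ i) * ‖u i‖ ^ q ≤ F a := by
        have him : ∑ i : Fin n, w (ρ i) * ‖u i‖ ^ q
            = ∑ j ∈ Finset.univ.image ρ, w j * ‖f j - Ψ.mulVec a j‖ ^ q := by
          rw [Finset.sum_image (fun x _ y _ h => hρinj h)]
        rw [hFdef, him]
        apply Finset.sum_le_sum_of_subset_of_nonneg (Finset.subset_univ _)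
        intro j _ _
        exact mul_nonneg (hw0 j) (Real.rpow_nonneg (norm_nonneg _) q)
      calc w₀ * (‖a‖/K - C₀) ^ q ≤ w₀ * ‖u i₀‖ ^ q :=
            mul_le_mul_of_nonneg_left h4 hw₀pos.le
        _ ≤ w (ρ i₀) * ‖u i₀‖ ^ q :=
            mul_le_mul_of_nonneg_right (hw₀le i₀) (Real.rpow_nonneg (norm_nonneg _) q)
        _ ≤ ∑ i, w (ρ i) * ‖u i‖ ^ q :=
            Finset.single_le_sum (fun i _ =>
              mul_nonneg (hw0 _) (Real.rpow_nonneg (norm_nonneg _) q))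
              (Finset.mem_univ i₀)
        _ ≤ F a := hsum
  have hcoer : Filter.Tendsto F (Filter.cocompact _) Filter.atTop := by
    apply Filter.tendsto_atTop_mono hlower
    have h1 : Filter.Tendsto (fun r : ℝ => w₀ * (max 0 (r/K - C₀)) ^ q)
        Filter.atTop Filter.atTop := by
      apply Filter.Tendsto.const_mul_atTop hw₀pos
      apply (tendsto_rpow_atTop hq0).comp
      apply Filter.tendsto_atTop_mono (fun r => le_max_right 0 (r/K - C₀))
      have h2 : Filter.Tendsto (fun r : ℝ => r/K) Filter.atTop Filter.atTop :=
        Filter.Tendsto.atTop_div_const hKpos Filter.tendsto_id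
      simpa [sub_eq_add_neg] using Filter.tendsto_atTop_add_const_right Filter.atTop (-C₀) h2
    exact h1.comp tendsto_norm_cocompact_atTop
  obtain ⟨a₀, ha₀⟩ := hFc.exists_forall_le hcoer
  have hinf : (⨅ a' : Fin n → ℂ, F a') = F a₀ :=
    le_antisymm (ciInf_le hbdd a₀) (le_ciInf ha₀)
  refine ⟨a₀, hinf.symm, ?_⟩
  intro b hb
  by_contra hne'
  have h1 := hmid b a₀ hne'
  have h2 : F b = F a₀ := hb.trans hinf
  have h3 : F a₀ ≤ F ((1/2:ℂ) • (b + a₀)) := ha₀ _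
  rw [h2] at h1
  linarith
end

section
/- (Lemma 3.1) Let ψ_1,…,ψ_n : [a,b] → ℝ be continuous functions satisfying the Haar condition, and let z_0 < z_1 < … < z_n be n + 1 points in [a,b]. Let M ∈ ℝ^{(n+1)×n} be the matrix with entries M_{i,j} = ψ_j(z_{i−1}). Then the solution set {t ∈ ℝ^{n+1} : Mᵀ t = 0} is a one-dimensional subspace of ℝ^{n+1}, and every nonzero t = (t_1,…,t_{n+1}) in it satisfies t_j · t_{j+1} < 0 for all j = 1,…,n. -/
open scoped BigOperators

namespace HaarKernelAux

variable {n : ℕ} {a b : ℝ}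

/-- Determinant of the sample matrix of `ψ` at points `w`. -/
noncomputable def detf (ψ : Fin n → ℝ → ℝ) (w : Fin n → ℝ) : ℝ :=
  (Matrix.of (fun i j => ψ j (w i)) : Matrix (Fin n) (Fin n) ℝ).det

lemma S_convex : Convex ℝ {v : Fin n → ℝ | StrictMono v ∧ ∀ i, v i ∈ Set.Icc a b} := by
  intro v hv u hu p q hp hq hpq
  refine ⟨fun i j hij => ?_, fun i => ?_⟩
  · have h1 := hv.1 hij
    have h2 := hu.1 hij
    simp only [Pi.add_apply, Pi.smul_apply, smul_eq_mul]
    rcases eq_or_lt_of_le hp with hp0 | hp0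
    · nlinarith
    · nlinarith
  · have := (convex_Icc a b) (hv.2 i) (hu.2 i) hp hq hpq
    simpa using this

lemma detf_continuousOn (ψ : Fin n → ℝ → ℝ)
    (hcont : ∀ i, ContinuousOn (ψ i) (Set.Icc a b)) :
    ContinuousOn (detf ψ) {v : Fin n → ℝ | StrictMono v ∧ ∀ i, v i ∈ Set.Icc a b} := by
  have hdet : Continuous fun A : Matrix (Fin n) (Fin n) ℝ => A.det :=
    Continuous.matrix_det continuous_id
  have hm : ContinuousOn
      (fun v : Fin n → ℝ => (Matrix.of (fun i j => ψ j (v i)) : Matrix (Fin n) (Fin n) ℝ))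
      {v : Fin n → ℝ | StrictMono v ∧ ∀ i, v i ∈ Set.Icc a b} := by
    apply continuousOn_pi.2; intro i; apply continuousOn_pi.2; intro j
    exact (hcont j).comp (continuous_apply i).continuousOn (fun v hv => hv.2 i)
  exact hdet.comp_continuousOn hm

lemma detf_ne_zero (ψ : Fin n → ℝ → ℝ)
    (hHaar : ∀ z : Fin n → ℝ, (∀ i, z i ∈ Set.Icc a b) → Function.Injective z →
      IsUnit (Matrix.of (fun i j => ψ j (z i)) : Matrix (Fin n) (Fin n) ℝ))
    {w : Fin n → ℝ} (hw : StrictMono w) (hwab : ∀ i, w i ∈ Set.Icc a b) :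
    detf ψ w ≠ 0 := by
  have h := hHaar w hwab hw.injective
  rw [Matrix.isUnit_iff_isUnit_det] at h
  exact h.ne_zero

lemma detf_mul_pos (ψ : Fin n → ℝ → ℝ)
    (hcont : ∀ i, ContinuousOn (ψ i) (Set.Icc a b))
    (hHaar : ∀ z : Fin n → ℝ, (∀ i, z i ∈ Set.Icc a b) → Function.Injective z →
      IsUnit (Matrix.of (fun i j => ψ j (z i)) : Matrix (Fin n) (Fin n) ℝ))
    {w w' : Fin n → ℝ} (hw : StrictMono w) (hwab : ∀ i, w i ∈ Set.Icc a b)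
    (hw' : StrictMono w') (hw'ab : ∀ i, w' i ∈ Set.Icc a b) :
    0 < detf ψ w * detf ψ w' := by
  set S := {v : Fin n → ℝ | StrictMono v ∧ ∀ i, v i ∈ Set.Icc a b} with hSdef
  have hS : IsPreconnected S := S_convex.isPreconnected
  have hC := detf_continuousOn ψ hcont
  have hne : ∀ v ∈ S, detf ψ v ≠ 0 := fun v hv => detf_ne_zero ψ hHaar hv.1 hv.2
  have hwS : w ∈ S := ⟨hw, hwab⟩
  have hw'S : w' ∈ S := ⟨hw', hw'ab⟩
  have hw0 := hne w hwS
  have hw'0 := hne w' hw'S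
  rcases lt_trichotomy (detf ψ w * detf ψ w') 0 with h | h | h
  · exfalso
    rcases le_total (detf ψ w) (detf ψ w') with hle | hle
    · have h0 : (0:ℝ) ∈ Set.Icc (detf ψ w) (detf ψ w') := by
        constructor <;> nlinarith
      obtain ⟨v, hv, hv0⟩ := hS.intermediate_value hwS hw'S hC h0
      exact hne v hv hv0
    · have h0 : (0:ℝ) ∈ Set.Icc (detf ψ w') (detf ψ w) := by
        constructor <;> nlinarith
      obtain ⟨v, hv, hv0⟩ := hS.intermediate_value hw'S hwS hC h0
      exact hne v hv hv0
  · exact absurd (mul_eq_zero.1 h) (by push_neg; exact ⟨hw0, hw'0⟩)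
  · exact h

/-- The cofactor vector. -/
noncomputable def cof (ψ : Fin n → ℝ → ℝ) (z : Fin (n + 1) → ℝ) (i : Fin (n + 1)) : ℝ :=
  (-1 : ℝ) ^ (i : ℕ) * detf ψ (z ∘ i.succAbove)

lemma sum_cof (ψ : Fin n → ℝ → ℝ) (z : Fin (n + 1) → ℝ) (j : Fin n) :
    ∑ i, ψ j (z i) * cof ψ z i = 0 := by
  classical
  set B : Matrix (Fin (n + 1)) (Fin (n + 1)) ℝ :=
    Matrix.of fun i k => Fin.cases (ψ j (z i)) (fun l => ψ l (z i)) k with hB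
  have hdet0 : B.det = 0 := by
    refine Matrix.det_zero_of_column_eq (i := 0) (j := j.succ) (Fin.succ_ne_zero j).symm ?_
    intro k
    simp [hB]
  have hexp := Matrix.det_succ_column_zero B
  rw [hdet0] at hexp
  have : ∀ i : Fin (n + 1),
      (-1 : ℝ) ^ (i : ℕ) * B i 0 * (B.submatrix i.succAbove Fin.succ).det
        = ψ j (z i) * cof ψ z i := by
    intro i
    have hsub : B.submatrix i.succAbove Fin.succ
        = (Matrix.of fun k l => ψ l ((z ∘ i.succAbove) k) : Matrix (Fin n) (Fin n) ℝ) := by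
      ext k l
      simp [hB]
    rw [hsub]
    show (-1 : ℝ) ^ (i : ℕ) * B i 0 * detf ψ (z ∘ i.succAbove) = _
    have hB0 : B i 0 = ψ j (z i) := by simp [hB]
    rw [hB0, cof]; ring
  rw [Finset.sum_congr rfl (fun i _ => this i)] at hexp
  exact hexp.symm

end HaarKernelAux

open HaarKernelAux

/-- Lemma 3.1: for continuous functions `ψ_1,…,ψ_n` on `[a,b]` satisfying the Haar
condition and points `z_0 < z_1 < … < z_n` in `[a,b]`, the kernel of the transpose of
the `(n+1)×n` matrix `M_{i,j} = ψ_j(z_{i-1})` is a one-dimensional subspace of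
`ℝ^{n+1}`, and every nonzero vector `t` in it has strictly alternating consecutive
signs: `t_j t_{j+1} < 0`. -/
theorem haar_kernel_alternating
    (n : ℕ) (hn : 0 < n) (a b : ℝ) (hab : a < b)
    (ψ : Fin n → ℝ → ℝ)
    (hcont : ∀ i, ContinuousOn (ψ i) (Set.Icc a b))
    (hHaar : ∀ z : Fin n → ℝ, (∀ i, z i ∈ Set.Icc a b) → Function.Injective z →
      IsUnit (Matrix.of (fun i j => ψ j (z i)) : Matrix (Fin n) (Fin n) ℝ))
    (z : Fin (n + 1) → ℝ) (hz : StrictMono z) (hzab : ∀ i, z i ∈ Set.Icc a b) :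
    Module.finrank ℝ
      (LinearMap.ker
        (Matrix.mulVecLin
          (Matrix.of (fun i j => ψ j (z i)) : Matrix (Fin (n + 1)) (Fin n) ℝ).transpose))
      = 1
    ∧ ∀ t : Fin (n + 1) → ℝ,
        (Matrix.of (fun i j => ψ j (z i)) :
          Matrix (Fin (n + 1)) (Fin n) ℝ).transpose.mulVec t = 0 →
        t ≠ 0 → ∀ j : Fin n, t j.castSucc * t j.succ < 0 := by
  classical
  set M : Matrix (Fin (n + 1)) (Fin n) ℝ := Matrix.of (fun i j => ψ j (z i)) with hM
  set L := M.transpose.mulVecLin with hL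
  -- invertibility of each n×n submatrix
  have hA : ∀ i0 : Fin (n + 1),
      IsUnit (Matrix.of (fun k l => ψ l (z (i0.succAbove k))) : Matrix (Fin n) (Fin n) ℝ) := by
    intro i0
    exact hHaar (z ∘ i0.succAbove) (fun k => hzab _)
      (hz.comp (Fin.strictMono_succAbove i0)).injective
  -- surjectivity of L
  have hsurj : Function.Surjective L := by
    intro y
    set A : Matrix (Fin n) (Fin n) ℝ := Matrix.of (fun k l => ψ l (z (Fin.succ k))) with hAdef
    have hAu : IsUnit A.transpose.det := by
      rw [Matrix.det_transpose]
      have := hA 0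
      rw [Fin.succAbove_zero] at this
      exact (Matrix.isUnit_iff_isUnit_det _).1 this
    set s : Fin n → ℝ := A.transpose⁻¹.mulVec y with hs
    refine ⟨(Fin.cons (0:ℝ) s : Fin (n+1) → ℝ), ?_⟩
    have hAs : A.transpose.mulVec s = y := by
      rw [hs, Matrix.mulVec_mulVec, Matrix.mul_nonsing_inv _ hAu, Matrix.one_mulVec]
    funext l
    rw [Matrix.mulVecLin_apply]
    simp only [Matrix.mulVec, dotProduct, Matrix.transpose_apply]
    rw [Fin.sum_univ_succ]
    simp only [Fin.cons_zero, Fin.cons_succ, mul_zero, zero_add]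
    calc ∑ k, M k.succ l * s k = A.transpose.mulVec s l := by
          apply Finset.sum_congr rfl
          intro k _
          simp [hM, hAdef, Matrix.mulVec, dotProduct]
      _ = y l := by rw [hAs]
  -- rank-nullity
  have hrank1 : Module.finrank ℝ (LinearMap.ker L) = 1 := by
    have hrn := LinearMap.finrank_range_add_finrank_ker L
    have hrange : LinearMap.range L = ⊤ := LinearMap.range_eq_top.2 hsurj
    rw [hrange] at hrn
    rw [finrank_top, Module.finrank_pi, Module.finrank_pi] at hrn
    simp only [Fintype.card_fin] at hrn
    omega
  refine ⟨hrank1, ?_⟩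
  -- the cofactor vector spans the kernel
  set u : Fin (n + 1) → ℝ := cof ψ z with hu
  have hukernel : u ∈ LinearMap.ker L := by
    rw [LinearMap.mem_ker]
    funext l
    rw [Matrix.mulVecLin_apply]
    show ∑ i, M i l * u i = (0 : Fin n → ℝ) l
    have := sum_cof ψ z l
    simpa [hM, hu] using this
  have hune : ∀ i, u i ≠ 0 := by
    intro i
    have hd : detf ψ (z ∘ i.succAbove) ≠ 0 :=
      detf_ne_zero ψ hHaar (hz.comp (Fin.strictMono_succAbove i)) (fun k => hzab _)
    simp only [hu, cof]
    positivity
  have hu0 : u ≠ 0 := fun h => hune 0 (by rw [h]; rfl)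
  have hspan : (Submodule.span ℝ {u}) = LinearMap.ker L := by
    apply Submodule.eq_of_le_of_finrank_eq
    · rw [Submodule.span_le, Set.singleton_subset_iff]
      exact hukernel
    · rw [finrank_span_singleton hu0, hrank1]
  intro t ht htne j
  have htker : t ∈ LinearMap.ker L := by
    rw [LinearMap.mem_ker, Matrix.mulVecLin_apply]
    exact ht
  rw [← hspan, Submodule.mem_span_singleton] at htker
  obtain ⟨c, hct⟩ := htker
  have hc : c ≠ 0 := by
    rintro rfl
    exact htne (by rw [← hct, zero_smul])
  -- signs
  set D1 := detf ψ (z ∘ (j.castSucc).succAbove) with hD1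
  set D2 := detf ψ (z ∘ (j.succ).succAbove) with hD2
  have hD : 0 < D1 * D2 :=
    detf_mul_pos ψ hcont hHaar
      (hz.comp (Fin.strictMono_succAbove j.castSucc)) (fun k => hzab _)
      (hz.comp (Fin.strictMono_succAbove j.succ)) (fun k => hzab _)
  have e1 : t j.castSucc = c * ((-1 : ℝ) ^ (j : ℕ) * D1) := by
    rw [← hct]
    simp [hu, cof, Fin.coe_castSucc, hD1]
  have e2 : t j.succ = c * ((-1 : ℝ) ^ ((j : ℕ) + 1) * D2) := by
    rw [← hct]
    simp [hu, cof, Fin.val_succ, hD2]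
  rw [e1, e2, pow_succ]
  have hP : ((-1 : ℝ) ^ (j : ℕ)) ^ 2 = 1 := by
    rw [← pow_mul, mul_comm, pow_mul]
    norm_num
  have key : c * ((-1 : ℝ) ^ (j : ℕ) * D1) * (c * ((-1 : ℝ) ^ (j : ℕ) * -1 * D2))
      = -((c * c) * (((-1 : ℝ) ^ (j : ℕ)) ^ 2 * (D1 * D2))) := by ring
  rw [key, hP, one_mul]
  exact neg_lt_zero.2 (mul_pos (mul_self_pos.2 hc) hD)
end

section
/- (Gradient of the L_2 dual function, Proposition 4.1) Let w ∈ ℝ^m satisfy w_j > 0 for all j and set W = diag(w). Then d is differentiable at w and its gradient is ∇d(w) = (|r_1(w)|², …, |r_m(w)|²) ∈ ℝ^m, where r(w) = f − Ψ (Ψᴴ W Ψ)^{−1} Ψᴴ W f. -/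
open scoped BigOperators

/-- The residual `r(w) = f − Ψ a(w)` of the weighted least-squares problem, where
`a(w) = (Ψᴴ W Ψ)⁻¹ Ψᴴ W f` and `W = diag(w)`. -/
noncomputable def lsResidual (m n : ℕ) (f : Fin m → ℂ) (Ψ : Matrix (Fin m) (Fin n) ℂ)
    (w : Fin m → ℝ) : Fin m → ℂ :=
  f - Ψ.mulVec
    ((Ψ.conjTranspose * Matrix.diagonal (fun j => (w j : ℂ)) * Ψ)⁻¹.mulVec
      ((Ψ.conjTranspose * Matrix.diagonal (fun j => (w j : ℂ))).mulVec f))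

/-- The `L_2` dual function `d(w) = ∑_j w_j |r_j(w)|²`. -/
noncomputable def lsDual (m n : ℕ) (f : Fin m → ℂ) (Ψ : Matrix (Fin m) (Fin n) ℂ)
    (w : Fin m → ℝ) : ℝ :=
  ∑ j, w j * ‖lsResidual m n f Ψ w j‖ ^ 2

section Aux

open Matrix

variable {m n : ℕ} (f : Fin m → ℂ) (Ψ : Matrix (Fin m) (Fin n) ℂ)

private lemma psi_mulVec_eq_zero (hrank : Ψ.rank = n) {x : Fin n → ℂ}
    (hx : Ψ.mulVec x = 0) : x = 0 := by
  have hker : LinearMap.ker Ψ.mulVecLin = ⊥ := by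
    have h1 := Ψ.mulVecLin.finrank_range_add_finrank_ker
    rw [Matrix.rank] at hrank
    have h2 : Module.finrank ℂ (Fin n → ℂ) = n := by simp
    rw [hrank, h2] at h1
    have h3 : Module.finrank ℂ (LinearMap.ker Ψ.mulVecLin) = 0 := by omega
    exact Submodule.finrank_eq_zero.mp h3
  have hx' : x ∈ LinearMap.ker Ψ.mulVecLin := by
    simpa [LinearMap.mem_ker, Matrix.mulVecLin_apply] using hx
  rw [hker] at hx'
  simpa using hx'

private lemma detB_ne_zero (hrank : Ψ.rank = n) (w' : Fin m → ℝ) (hw' : ∀ j, 0 < w' j) :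
    (Ψ.conjTranspose * Matrix.diagonal (fun j => (w' j : ℂ)) * Ψ).det ≠ 0 := by
  intro hdet
  obtain ⟨v, hv0, hv⟩ := Matrix.exists_mulVec_eq_zero_iff.mpr hdet
  set y := Ψ.mulVec v with hy
  have h0 : star v ⬝ᵥ ((Ψ.conjTranspose * Matrix.diagonal (fun j => (w' j : ℂ)) * Ψ).mulVec v)
      = 0 := by rw [hv, dotProduct_zero]
  rw [Matrix.mul_assoc, ← Matrix.mulVec_mulVec, Matrix.dotProduct_mulVec,
    ← Matrix.star_mulVec, ← Matrix.mulVec_mulVec] at h0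
  have hreal : (↑(∑ j, w' j * Complex.normSq (y j)) : ℂ) = 0 := by
    rw [← h0]
    push_cast
    simp only [dotProduct, Matrix.mulVec_diagonal, Pi.star_apply, RCLike.star_def]
    refine Finset.sum_congr rfl fun j _ => ?_
    rw [Complex.normSq_eq_conj_mul_self]
    ring
  have hsum : ∑ j, w' j * Complex.normSq (y j) = 0 := by exact_mod_cast hreal
  have hterm : ∀ j ∈ Finset.univ, w' j * Complex.normSq (y j) = 0 :=
    (Finset.sum_eq_zero_iff_of_nonneg fun j _ =>
      mul_nonneg (hw' j).le (Complex.normSq_nonneg _)).mp hsum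
  have hy0 : y = 0 := by
    funext j
    have := hterm j (Finset.mem_univ j)
    have hns : Complex.normSq (y j) = 0 := by
      rcases mul_eq_zero.mp this with h | h
      · exact absurd h (hw' j).ne'
      · exact h
    simpa using Complex.normSq_eq_zero.mp hns
  exact hv0 (psi_mulVec_eq_zero Ψ hrank hy0)

private lemma normal_eq (hrank : Ψ.rank = n) (w' : Fin m → ℝ) (hw' : ∀ j, 0 < w' j) :
    (Ψ.conjTranspose * Matrix.diagonal (fun j => (w' j : ℂ))).mulVec
      (lsResidual m n f Ψ w') = 0 := by
  set W := Matrix.diagonal (fun j => ((w' j : ℝ) : ℂ)) with hW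
  have hdet : IsUnit (Ψ.conjTranspose * W * Ψ).det :=
    isUnit_iff_ne_zero.mpr (detB_ne_zero Ψ hrank w' hw')
  have key : (Ψ.conjTranspose * W).mulVec
      (Ψ.mulVec ((Ψ.conjTranspose * W * Ψ)⁻¹.mulVec ((Ψ.conjTranspose * W).mulVec f)))
      = (Ψ.conjTranspose * W).mulVec f := by
    rw [Matrix.mulVec_mulVec ((Ψ.conjTranspose * W * Ψ)⁻¹.mulVec
        ((Ψ.conjTranspose * W).mulVec f)) (Ψ.conjTranspose * W) Ψ,
      Matrix.mulVec_mulVec ((Ψ.conjTranspose * W).mulVec f) (Ψ.conjTranspose * W * Ψ)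
        (Ψ.conjTranspose * W * Ψ)⁻¹,
      Matrix.mul_nonsing_inv _ hdet, Matrix.one_mulVec]
  unfold lsResidual
  rw [Matrix.mulVec_sub, key, sub_self]

private lemma ls_optimal (hrank : Ψ.rank = n) (w' : Fin m → ℝ) (hw' : ∀ j, 0 < w' j)
    (x : Fin n → ℂ) :
    lsDual m n f Ψ w' ≤ ∑ j, w' j * Complex.normSq (f j - Ψ.mulVec x j) := by
  set W := Matrix.diagonal (fun j => ((w' j : ℝ) : ℂ)) with hW
  set r := lsResidual m n f Ψ w' with hr
  set u := (Ψ.conjTranspose * W * Ψ)⁻¹.mulVec ((Ψ.conjTranspose * W).mulVec f) - x with hu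
  set y := Ψ.mulVec u with hy
  have hsplit : ∀ j, f j - Ψ.mulVec x j = r j + y j := by
    intro j
    have : y = Ψ.mulVec ((Ψ.conjTranspose * W * Ψ)⁻¹.mulVec
        ((Ψ.conjTranspose * W).mulVec f)) - Ψ.mulVec x := by
      rw [hy, hu, Matrix.mulVec_sub]
    rw [hr]
    simp only [lsResidual, this, Pi.sub_apply]
    ring
  -- the cross term vanishes
  have h1 : star y ⬝ᵥ (W.mulVec r) = 0 := by
    rw [hy, Matrix.star_mulVec, ← Matrix.dotProduct_mulVec, Matrix.mulVec_mulVec,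
      normal_eq f Ψ hrank w' hw', dotProduct_zero]
  have h2 : ∑ j, ((w' j : ℂ) * (r j * (starRingEnd ℂ) (y j))) = star y ⬝ᵥ (W.mulVec r) := by
    simp only [hW, dotProduct, Matrix.mulVec_diagonal, Pi.star_apply, RCLike.star_def]
    exact Finset.sum_congr rfl fun j _ => by ring
  have cross : ∑ j, w' j * (r j * (starRingEnd ℂ) (y j)).re = 0 := by
    have h3 : (∑ j, ((w' j : ℂ) * (r j * (starRingEnd ℂ) (y j)))).re = 0 := by
      rw [h2, h1]; simp
    rw [Complex.re_sum] at h3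
    simpa [Complex.re_ofReal_mul] using h3
  have expand : ∀ j, w' j * Complex.normSq (r j + y j)
      = w' j * Complex.normSq (r j) + w' j * Complex.normSq (y j)
        + 2 * (w' j * (r j * (starRingEnd ℂ) (y j)).re) := by
    intro j
    rw [Complex.normSq_add]
    ring
  have hdual : lsDual m n f Ψ w' = ∑ j, w' j * Complex.normSq (r j) := by
    simp [lsDual, Complex.sq_norm, hr]
  calc lsDual m n f Ψ w' = ∑ j, w' j * Complex.normSq (r j) := hdual
    _ ≤ ∑ j, w' j * Complex.normSq (r j) + ∑ j, w' j * Complex.normSq (y j) := by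
        have : 0 ≤ ∑ j, w' j * Complex.normSq (y j) :=
          Finset.sum_nonneg fun j _ => mul_nonneg (hw' j).le (Complex.normSq_nonneg _)
        linarith
    _ = ∑ j, w' j * Complex.normSq (f j - Ψ.mulVec x j) := by
        have : ∑ j, w' j * Complex.normSq (f j - Ψ.mulVec x j)
            = (∑ j, w' j * Complex.normSq (r j)) + (∑ j, w' j * Complex.normSq (y j))
              + 2 * ∑ j, w' j * (r j * (starRingEnd ℂ) (y j)).re := by
          rw [Finset.mul_sum, ← Finset.sum_add_distrib, ← Finset.sum_add_distrib]
          refine Finset.sum_congr rfl fun j _ => ?_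
          rw [hsplit j, expand j]
        rw [this, cross]
        ring

end Aux

set_option maxHeartbeats 2000000 in
/-- Gradient of the `L_2` dual function (Proposition 4.1): for `w > 0`, `d` is
differentiable at `w` with gradient `(|r_1(w)|², …, |r_m(w)|²)`. -/
theorem gradient_of_dual
    (m n : ℕ) (hn : 0 < n) (hnm : n ≤ m)
    (f : Fin m → ℂ) (Ψ : Matrix (Fin m) (Fin n) ℂ) (hrank : Ψ.rank = n)
    (w : Fin m → ℝ) (hw : ∀ j, 0 < w j) :
    ∃ L : (Fin m → ℝ) →L[ℝ] ℝ,
      HasFDerivAt (lsDual m n f Ψ) L w ∧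
      ∀ v : Fin m → ℝ, L v = ∑ j, ‖lsResidual m n f Ψ w j‖ ^ 2 * v j := by
  classical
  set q : Fin m → ℝ := fun j => Complex.normSq (lsResidual m n f Ψ w j) with hq
  set L : (Fin m → ℝ) →L[ℝ] ℝ :=
    ∑ j, q j • (ContinuousLinearMap.proj j : (Fin m → ℝ) →L[ℝ] ℝ) with hLdef
  have hL : ∀ v : Fin m → ℝ, L v = ∑ j, q j * v j := by
    intro v
    simp [hLdef, ContinuousLinearMap.sum_apply, ContinuousLinearMap.smul_apply,
      ContinuousLinearMap.proj_apply, smul_eq_mul]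
  refine ⟨L, ?_, fun v => by simp only [hL, hq, Complex.sq_norm]⟩
  -- continuity of w' ↦ normSq (r_j w') at w
  have hdiag : Continuous (fun w' : Fin m → ℝ => Matrix.diagonal (fun j => ((w' j : ℝ) : ℂ))) :=
    Continuous.matrix_diagonal (continuous_pi fun j =>
      Complex.continuous_ofReal.comp (continuous_apply j))
  have hBcont : Continuous (fun w' : Fin m → ℝ =>
      Ψ.conjTranspose * Matrix.diagonal (fun j => ((w' j : ℝ) : ℂ)) * Ψ) :=
    (continuous_const.matrix_mul hdiag).matrix_mul continuous_const
  have hCcont : Continuous (fun w' : Fin m → ℝ =>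
      (Ψ.conjTranspose * Matrix.diagonal (fun j => ((w' j : ℝ) : ℂ))).mulVec f) :=
    (continuous_const.matrix_mul hdiag).matrix_mulVec continuous_const
  have hdet : IsUnit ((Ψ.conjTranspose * Matrix.diagonal (fun j => ((w j : ℝ) : ℂ)) * Ψ).det) :=
    isUnit_iff_ne_zero.mpr (detB_ne_zero Ψ hrank w hw)
  have hinv : ContinuousAt (fun w' : Fin m → ℝ =>
      (Ψ.conjTranspose * Matrix.diagonal (fun j => ((w' j : ℝ) : ℂ)) * Ψ)⁻¹) w := by
    refine ContinuousAt.comp ?_ hBcont.continuousAt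
    exact continuousAt_matrix_inv _
      (NormedRing.inverse_continuousAt hdet.unit)
  have hmv : Continuous (fun p : Matrix (Fin n) (Fin n) ℂ × (Fin n → ℂ) => p.1.mulVec p.2) :=
    continuous_fst.matrix_mulVec continuous_snd
  have ha : ContinuousAt (fun w' : Fin m → ℝ =>
      (Ψ.conjTranspose * Matrix.diagonal (fun j => ((w' j : ℝ) : ℂ)) * Ψ)⁻¹.mulVec
        ((Ψ.conjTranspose * Matrix.diagonal (fun j => ((w' j : ℝ) : ℂ))).mulVec f)) w :=
    hmv.continuousAt.comp (hinv.prodMk hCcont.continuousAt)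
  have hres : ContinuousAt (lsResidual m n f Ψ) w := by
    have hsub : Continuous (fun v : Fin n → ℂ => f - Ψ.mulVec v) :=
      continuous_const.sub (continuous_const.matrix_mulVec continuous_id)
    exact hsub.continuousAt.comp ha
  have hQ : ∀ j, ContinuousAt (fun w' => Complex.normSq (lsResidual m n f Ψ w' j)) w :=
    fun j => Complex.continuous_normSq.continuousAt.comp
      (((continuous_apply j).continuousAt).comp hres)
  -- set up the little-o estimate
  rw [hasFDerivAt_iff_isLittleO_nhds_zero, Asymptotics.isLittleO_iff]
  intro ε hε
  have hadd : Filter.Tendsto (fun h : Fin m → ℝ => w + h) (nhds 0) (nhds w) :=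
    (continuous_const.add continuous_id).tendsto' 0 w (by simp)
  have htend : Filter.Tendsto
      (fun h : Fin m → ℝ => ∑ j, |Complex.normSq (lsResidual m n f Ψ (w + h) j) - q j|)
      (nhds 0) (nhds 0) := by
    have : Filter.Tendsto
        (fun h : Fin m → ℝ => ∑ j, |Complex.normSq (lsResidual m n f Ψ (w + h) j) - q j|)
        (nhds 0) (nhds (∑ j : Fin m, |q j - q j|)) := by
      refine tendsto_finset_sum _ fun j _ => ?_
      exact (((hQ j).tendsto.comp hadd).sub tendsto_const_nhds).abs
    simpa using this
  have h1 : ∀ᶠ h : Fin m → ℝ in nhds 0,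
      ∑ j, |Complex.normSq (lsResidual m n f Ψ (w + h) j) - q j| < ε :=
    htend.eventually (eventually_lt_nhds hε)
  have h2 : ∀ᶠ h : Fin m → ℝ in nhds 0, ∀ j, 0 < w j + h j := by
    rw [Filter.eventually_all]
    intro j
    have hj : Filter.Tendsto (fun h : Fin m → ℝ => h j) (nhds 0) (nhds 0) :=
      (continuous_apply j).tendsto' 0 0 rfl
    have := hj.eventually (eventually_gt_nhds (by linarith [hw j] : (-(w j) : ℝ) < 0))
    exact this.mono fun h hh => by linarith
  filter_upwards [h1, h2] with h hsum hpos
  set Q' : Fin m → ℝ := fun j => Complex.normSq (lsResidual m n f Ψ (w + h) j) with hQ'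
  have e1 : lsDual m n f Ψ (w + h) = ∑ j, (w j + h j) * Q' j := by
    simp [lsDual, Complex.sq_norm, hQ']
  have e0 : lsDual m n f Ψ w = ∑ j, w j * q j := by
    simp [lsDual, Complex.sq_norm, hq]
  -- upper bound : optimality at w + h, candidate a(w)
  have up : lsDual m n f Ψ (w + h) ≤ ∑ j, (w j + h j) * q j := by
    have := ls_optimal f Ψ hrank (w + h) hpos
      ((Ψ.conjTranspose * Matrix.diagonal (fun j => ((w j : ℝ) : ℂ)) * Ψ)⁻¹.mulVec
        ((Ψ.conjTranspose * Matrix.diagonal (fun j => ((w j : ℝ) : ℂ))).mulVec f))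
    simpa [lsResidual, hq] using this
  -- lower bound : optimality at w, candidate a(w+h)
  have low : lsDual m n f Ψ w ≤ ∑ j, w j * Q' j := by
    have := ls_optimal f Ψ hrank w hw
      ((Ψ.conjTranspose * Matrix.diagonal (fun j => (((w + h) j : ℝ) : ℂ)) * Ψ)⁻¹.mulVec
        ((Ψ.conjTranspose * Matrix.diagonal (fun j => (((w + h) j : ℝ) : ℂ))).mulVec f))
    simpa [lsResidual, hQ'] using this
  have hLh : L h = ∑ j, q j * h j := hL h
  have splitsum : ∑ j, (w j + h j) * q j = (∑ j, w j * q j) + ∑ j, q j * h j := by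
    rw [← Finset.sum_add_distrib]
    exact Finset.sum_congr rfl fun j _ => by ring
  have splitsum' : ∑ j, (w j + h j) * Q' j = (∑ j, w j * Q' j) + ∑ j, h j * Q' j := by
    rw [← Finset.sum_add_distrib]
    exact Finset.sum_congr rfl fun j _ => by ring
  have keyup : lsDual m n f Ψ (w + h) - lsDual m n f Ψ w - L h ≤ 0 := by
    rw [hLh, e0]
    have := up
    rw [splitsum] at this
    linarith
  have keylow : lsDual m n f Ψ (w + h) - lsDual m n f Ψ w - L h
      ≥ ∑ j, h j * (Q' j - q j) := by
    rw [hLh]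
    have hge : lsDual m n f Ψ (w + h) - lsDual m n f Ψ w ≥ ∑ j, h j * Q' j := by
      rw [e1, splitsum']
      linarith [low]
    have : ∑ j, h j * (Q' j - q j) = (∑ j, h j * Q' j) - ∑ j, q j * h j := by
      rw [← Finset.sum_sub_distrib]
      exact Finset.sum_congr rfl fun j _ => by ring
    linarith [hge, this.le, this.ge]
  have hbound : ∑ j, h j * (Q' j - q j) ≥ -(ε * ‖h‖) := by
    have habs2 : |∑ j, h j * (Q' j - q j)| ≤ ε * ‖h‖ := by
      calc |∑ j, h j * (Q' j - q j)| ≤ ∑ j, |h j * (Q' j - q j)| :=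
            Finset.abs_sum_le_sum_abs _ _
        _ ≤ ∑ j, ‖h‖ * |Q' j - q j| := by
            refine Finset.sum_le_sum fun j _ => ?_
            rw [abs_mul]
            have : |h j| ≤ ‖h‖ := by
              simpa [Real.norm_eq_abs] using norm_le_pi_norm h j
            exact mul_le_mul_of_nonneg_right this (abs_nonneg _)
        _ = ‖h‖ * ∑ j, |Q' j - q j| := by rw [Finset.mul_sum]
        _ ≤ ‖h‖ * ε := mul_le_mul_of_nonneg_left hsum.le (norm_nonneg h)
        _ = ε * ‖h‖ := mul_comm _ _
    linarith [(abs_le.mp habs2).1]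
  have habs : |lsDual m n f Ψ (w + h) - lsDual m n f Ψ w - L h| ≤ ε * ‖h‖ := by
    rw [abs_le]
    constructor
    · linarith [keylow, hbound]
    · have : (0 : ℝ) ≤ ε * ‖h‖ := mul_nonneg hε.le (norm_nonneg h)
      linarith [keyup]
  simpa [Real.norm_eq_abs] using habs
end

section
/- (Hessian of the L_2 dual function, Proposition 4.1) Let w ∈ ℝ^m satisfy w_j > 0 for all j and set W = diag(w). Then for all indices i, j, the partial derivative of the map w ↦ |r_i(w)|² with respect to w_j exists at w and equals −2 Re( conj(r_i(w)) · (Ψ (Ψᴴ W Ψ)^{−1} Ψᴴ)_{i,j} · r_j(w) ); equivalently, the Hessian of d at w is ∇²d(w) = −2 Re( diag(r(w))ᴴ Ψ (Ψᴴ W Ψ)^{−1} Ψᴴ diag(r(w)) ). -/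
open scoped BigOperators

open Matrix in
open scoped ComplexOrder in
/-- invertibility of `ΨᴴWΨ` -/
theorem aux_isUnit (m n : ℕ) (Ψ : Matrix (Fin m) (Fin n) ℂ) (hrank : Ψ.rank = n)
    (w : Fin m → ℝ) (hw : ∀ j, 0 < w j) :
    IsUnit (Ψ.conjTranspose * Matrix.diagonal (fun k => (w k : ℂ)) * Ψ) := by
  classical
  have hinj : Function.Injective Ψ.mulVecLin := by
    rw [← LinearMap.ker_eq_bot, ← Submodule.finrank_eq_zero (R := ℂ)]
    have h1 := Ψ.mulVecLin.finrank_range_add_finrank_ker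
    have h2 : Module.finrank ℂ (Fin n → ℂ) = n := Module.finrank_fin_fun (R := ℂ)
    unfold Matrix.rank at hrank
    omega
  have hD : Matrix.PosDef (Matrix.diagonal (fun k => (w k : ℂ))) :=
    Matrix.PosDef.diagonal fun k => Complex.zero_lt_real.mpr (hw k)
  have hpos : Matrix.PosDef (Ψᴴ * Matrix.diagonal (fun k => (w k : ℂ)) * Ψ) := by
    refine Matrix.PosDef.of_dotProduct_mulVec_pos ?_ ?_
    · exact Matrix.isHermitian_conjTranspose_mul_mul Ψ hD.1
    · intro x hx
      have hx' : Ψ *ᵥ x ≠ 0 := by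
        intro h
        apply hx
        apply hinj
        simpa [Matrix.mulVecLin_apply] using h
      have h0 := hD.dotProduct_mulVec_pos hx'
      calc (0 : ℂ) < star (Ψ *ᵥ x) ⬝ᵥ (Matrix.diagonal (fun k => (w k : ℂ)) *ᵥ (Ψ *ᵥ x)) := h0
        _ = star x ⬝ᵥ ((Ψᴴ * Matrix.diagonal (fun k => (w k : ℂ)) * Ψ) *ᵥ x) := by
            rw [← Matrix.mulVec_mulVec, ← Matrix.mulVec_mulVec, dotProduct_mulVec (star x),
              ← Matrix.star_mulVec]
  exact hpos.isUnit

/-- Hessian of the `L_2` dual function (Proposition 4.1): for `w > 0`, the partial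
derivative of `w ↦ |r_i(w)|²` with respect to `w_j` exists and equals
`−2 Re( conj(r_i(w)) · (Ψ (Ψᴴ W Ψ)⁻¹ Ψᴴ)_{i,j} · r_j(w) )`, i.e. the Hessian of `d`
at `w` is `−2 Re( diag(r)ᴴ Ψ (Ψᴴ W Ψ)⁻¹ Ψᴴ diag(r) )`. -/
theorem hessian_of_dual
    (m n : ℕ) (hn : 0 < n) (hnm : n ≤ m)
    (f : Fin m → ℂ) (Ψ : Matrix (Fin m) (Fin n) ℂ) (hrank : Ψ.rank = n)
    (w : Fin m → ℝ) (hw : ∀ j, 0 < w j) :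
    ∀ i j : Fin m,
      HasDerivAt
        (fun s : ℝ => ‖lsResidual m n f Ψ (Function.update w j s) i‖ ^ 2)
        (-2 * ((starRingEnd ℂ) (lsResidual m n f Ψ w i) *
          (Ψ * (Ψ.conjTranspose * Matrix.diagonal (fun k => (w k : ℂ)) * Ψ)⁻¹ *
            Ψ.conjTranspose) i j *
          lsResidual m n f Ψ w j).re)
        (w j) := by
  classical
  intro i j
  letI : SeminormedRing (Matrix (Fin n) (Fin n) ℂ) := Matrix.linftyOpSemiNormedRing
  letI : NormedRing (Matrix (Fin n) (Fin n) ℂ) := Matrix.linftyOpNormedRing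
  letI : NormedAlgebra ℝ (Matrix (Fin n) (Fin n) ℂ) := Matrix.linftyOpNormedAlgebra
  letI : CompleteSpace (Matrix (Fin n) (Fin n) ℂ) := FiniteDimensional.complete ℝ _
  -- notation
  set E : Matrix (Fin m) (Fin m) ℂ := Matrix.diagonal (Pi.single j 1) with hEdef
  set D₀ : Matrix (Fin m) (Fin m) ℂ := Matrix.diagonal (fun k => (w k : ℂ)) with hD₀def
  set A₀ : Matrix (Fin n) (Fin n) ℂ := Ψ.conjTranspose * D₀ * Ψ with hA₀def
  set B : Matrix (Fin n) (Fin n) ℂ := Ψ.conjTranspose * E * Ψ with hBdef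
  have hU : IsUnit A₀ := aux_isUnit m n Ψ hrank w hw
  set N : Matrix (Fin n) (Fin n) ℂ := A₀⁻¹ with hNdef
  set c₀ : Fin n → ℂ := (Ψ.conjTranspose * D₀).mulVec f with hc₀def
  set e : Fin n → ℂ := (Ψ.conjTranspose * E).mulVec f with hedef
  set a₀ : Fin n → ℂ := N.mulVec c₀ with ha₀def
  set M' : Matrix (Fin n) (Fin n) ℂ := -(N * B * N) with hM'def
  -- families
  set D : ℝ → Matrix (Fin m) (Fin m) ℂ :=
    fun s => Matrix.diagonal (fun k => ((Function.update w j s k : ℝ) : ℂ)) with hDdef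
  set A : ℝ → Matrix (Fin n) (Fin n) ℂ := fun s => Ψ.conjTranspose * D s * Ψ with hAdef
  have hDaffine : ∀ s : ℝ, D s = D₀ + (s - w j) • E := by
    intro s
    ext k l
    rcases eq_or_ne k l with rfl | hkl
    · rcases eq_or_ne k j with rfl | hk
      · simp [hDdef, hD₀def, hEdef, Matrix.diagonal_apply_eq]
      · simp [hDdef, hD₀def, hEdef, Function.update_of_ne hk, Pi.single_eq_of_ne hk,
          Matrix.diagonal_apply_eq]
    · simp [hDdef, hD₀def, hEdef, Matrix.diagonal_apply_ne _ hkl]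
  have hDw : D (w j) = D₀ := by
    simp [hDdef, hD₀def, Function.update_eq_self]
  have hAaffine : ∀ s : ℝ, A s = A₀ + (s - w j) • B := by
    intro s
    show Ψ.conjTranspose * D s * Ψ = A₀ + (s - w j) • B
    rw [hDaffine s, hA₀def, hBdef, Matrix.mul_add, Matrix.add_mul, Matrix.mul_smul, Matrix.smul_mul]
  have hAw : A (w j) = A₀ := by simp only [hAdef, hDw, hA₀def]
  -- derivative of A
  have hA' : HasDerivAt A B (w j) := by
    have h : HasDerivAt (fun s : ℝ => A₀ + (s - w j) • B) ((1 : ℝ) • B) (w j) :=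
      (HasDerivAt.smul_const ((hasDerivAt_id (w j)).sub_const (w j)) B).const_add A₀
    simpa [funext hAaffine] using h
  -- derivative of the inverse
  have hAinv : HasDerivAt (fun s => (A s)⁻¹) M' (w j) := by
    have hu : HasFDerivAt Ring.inverse
        (-ContinuousLinearMap.mulLeftRight ℝ _ (↑hU.unit⁻¹) (↑hU.unit⁻¹)) (A (w j)) := by
      rw [hAw]
      conv in A₀ => rw [← hU.unit_spec]
      exact hasFDerivAt_ringInverse hU.unit
    have hcomp := hu.comp_hasDerivAt (w j) hA'
    have hcoe : (↑hU.unit⁻¹ : Matrix (Fin n) (Fin n) ℂ) = N := by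
      rw [Matrix.coe_units_inv, hU.unit_spec]
    have hfun : Ring.inverse ∘ A = fun s => (A s)⁻¹ := by
      funext s; exact (Matrix.nonsing_inv_eq_ringInverse _).symm
    rw [hfun] at hcomp
    have : (-ContinuousLinearMap.mulLeftRight ℝ (Matrix (Fin n) (Fin n) ℂ)
        (↑hU.unit⁻¹) (↑hU.unit⁻¹)) B = M' := by
      simp [ContinuousLinearMap.mulLeftRight_apply, hcoe, hM'def, mul_assoc]
    rwa [this] at hcomp
  -- derivative of entries of the inverse
  have hAinvEntry : ∀ k l, HasDerivAt (fun s => (A s)⁻¹ k l) (M' k l) (w j) := by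
    intro k l
    let π : Matrix (Fin n) (Fin n) ℂ →ₗ[ℝ] ℂ :=
      { toFun := fun M => M k l
        map_add' := fun _ _ => rfl
        map_smul' := fun _ _ => rfl }
    exact (LinearMap.toContinuousLinearMap π).hasFDerivAt.comp_hasDerivAt (w j) hAinv
  -- derivative of entries of the right-hand side vector
  have hcEntry : ∀ l, HasDerivAt (fun s => ((Ψ.conjTranspose * D s).mulVec f) l) (e l) (w j) := by
    intro l
    have hfun : (fun s => ((Ψ.conjTranspose * D s).mulVec f) l)
        = fun s : ℝ => c₀ l + ((s - w j : ℝ) : ℂ) * e l := by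
      funext s
      have h1 : Ψ.conjTranspose * D s = Ψ.conjTranspose * D₀ + (s - w j) • (Ψ.conjTranspose * E) := by
        rw [hDaffine s, Matrix.mul_add, Matrix.mul_smul]
      show ((Ψ.conjTranspose * D s).mulVec f) l = _
      rw [h1, Matrix.add_mulVec, Matrix.smul_mulVec]
      show (c₀ + (s - w j) • e) l = _
      rw [Pi.add_apply, Pi.smul_apply, Complex.real_smul]
    rw [hfun]
    have hid : HasDerivAt (fun s : ℝ => ((s - w j : ℝ) : ℂ)) 1 (w j) := by
      simpa using ((hasDerivAt_id (w j)).sub_const (w j)).ofReal_comp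
    simpa using (hid.mul_const (e l)).const_add (c₀ l)
  -- the residual entry as an explicit function
  have hmain : (fun s : ℝ => lsResidual m n f Ψ (Function.update w j s) i)
      = fun s => f i - ∑ k, Ψ i k * (∑ l, (A s)⁻¹ k l * ((Ψ.conjTranspose * D s).mulVec f) l) := by
    funext s
    rfl
  -- derivative of the residual entry
  have hu : HasDerivAt
      (fun s : ℝ => f i - ∑ k, Ψ i k * (∑ l, (A s)⁻¹ k l * ((Ψ.conjTranspose * D s).mulVec f) l))
      (-∑ k, Ψ i k * (∑ l, (M' k l * c₀ l + N k l * e l))) (w j) := by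
    have hterm : ∀ k, HasDerivAt
        (fun s => ∑ l, (A s)⁻¹ k l * ((Ψ.conjTranspose * D s).mulVec f) l)
        (∑ l, (M' k l * c₀ l + N k l * e l)) (w j) := by
      intro k
      apply HasDerivAt.fun_sum
      intro l _
      have h := (hAinvEntry k l).fun_mul (hcEntry l)
      simpa [hAw, hDw, hNdef, hc₀def] using h
    have h1 : HasDerivAt
        (fun s => ∑ k, Ψ i k * (∑ l, (A s)⁻¹ k l * ((Ψ.conjTranspose * D s).mulVec f) l))
        (∑ k, Ψ i k * (∑ l, (M' k l * c₀ l + N k l * e l))) (w j) :=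
      HasDerivAt.fun_sum (fun k _ => (hterm k).const_mul (Ψ i k))
    simpa using h1.const_sub (f i)
  -- identify the derivative value
  have hval : (-∑ k, Ψ i k * (∑ l, (M' k l * c₀ l + N k l * e l)))
      = -((Ψ * N * Ψ.conjTranspose) i j * lsResidual m n f Ψ w j) := by
    have hstep1 : (∑ k, Ψ i k * (∑ l, (M' k l * c₀ l + N k l * e l)))
        = (Ψ.mulVec (M'.mulVec c₀ + N.mulVec e)) i := by
      simp [Matrix.mulVec, dotProduct, Finset.sum_add_distrib]
    have hstep2 : M'.mulVec c₀ + N.mulVec e = N.mulVec (e - B.mulVec a₀) := by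
      rw [hM'def, ha₀def]
      rw [Matrix.neg_mulVec, Matrix.mulVec_sub]
      rw [← Matrix.mulVec_mulVec, ← Matrix.mulVec_mulVec]
      abel
    have hE_single : ∀ v : Fin m → ℂ, E.mulVec v = Pi.single j (v j) := by
      intro v
      funext k
      rcases eq_or_ne k j with rfl | hk
      · simp [hEdef, Matrix.mulVec_diagonal]
      · simp [hEdef, Matrix.mulVec_diagonal, Pi.single_eq_of_ne hk, Pi.single_eq_of_ne' hk]
    have hstep3 : e - B.mulVec a₀
        = Ψ.conjTranspose.mulVec (Pi.single j (lsResidual m n f Ψ w j)) := by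
      have he' : e = Ψ.conjTranspose.mulVec (Pi.single j (f j)) := by
        rw [hedef, ← Matrix.mulVec_mulVec, hE_single]
      have hB' : B.mulVec a₀ = Ψ.conjTranspose.mulVec (Pi.single j ((Ψ.mulVec a₀) j)) := by
        rw [hBdef, ← Matrix.mulVec_mulVec, ← Matrix.mulVec_mulVec, hE_single]
      rw [he', hB', ← Matrix.mulVec_sub, ← Pi.single_sub]
      rfl
    rw [hstep1, hstep2, hstep3, Matrix.mulVec_mulVec, Matrix.mulVec_mulVec,
      Matrix.mulVec_single]
    rfl
  rw [hval] at hu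
  -- assemble
  have hre : HasDerivAt
      (fun s => (lsResidual m n f Ψ (Function.update w j s) i).re)
      (-((Ψ * N * Ψ.conjTranspose) i j * lsResidual m n f Ψ w j)).re (w j) := by
    have := Complex.reCLM.hasFDerivAt.comp_hasDerivAt (w j) (hmain ▸ hu)
    exact this
  have him : HasDerivAt
      (fun s => (lsResidual m n f Ψ (Function.update w j s) i).im)
      (-((Ψ * N * Ψ.conjTranspose) i j * lsResidual m n f Ψ w j)).im (w j) := by
    have := Complex.imCLM.hasFDerivAt.comp_hasDerivAt (w j) (hmain ▸ hu)
    exact this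
  have hsq := (hre.fun_mul hre).fun_add (him.fun_mul him)
  have hfun2 : (fun s : ℝ => ‖lsResidual m n f Ψ (Function.update w j s) i‖ ^ 2)
      = fun s => (lsResidual m n f Ψ (Function.update w j s) i).re
          * (lsResidual m n f Ψ (Function.update w j s) i).re
        + (lsResidual m n f Ψ (Function.update w j s) i).im
          * (lsResidual m n f Ψ (Function.update w j s) i).im := by
    funext s
    rw [Complex.sq_norm, Complex.normSq_apply]
  rw [hfun2]
  have huw : lsResidual m n f Ψ (Function.update w j (w j)) i = lsResidual m n f Ψ w i := by
    rw [Function.update_eq_self]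
  rw [huw] at hsq
  refine hsq.congr_deriv ?_
  simp only [Complex.neg_re, Complex.neg_im, Complex.mul_re, Complex.mul_im,
    Complex.conj_re, Complex.conj_im]
  ring
end

section
/- (Stagnation of Lawson's iteration with exponent 2) Let w ∈ ℝ^m with w_j > 0 for all j and ∑_j w_j = 1, suppose d(w) > 0, and define w' ∈ ℝ^m by w'_j = w_j |r_j(w)|² / d(w). Let a' ∈ ℂ^n attain inf_{a ∈ ℂ^n} ∑_{j=1}^m w'_j |f_j − (Ψ a)_j|², with residual r'_j = f_j − (Ψ a')_j. If ∑_{j=1}^m w'_j |r'_j|² = d(w), then there exists a constant c ∈ ℂ such that conj(r_j(w)) · r'_j = c for every index j. -/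
open scoped BigOperators

open scoped ComplexOrder in
lemma lawson_mulVec_inj_of_rank {m n : ℕ} (Ψ : Matrix (Fin m) (Fin n) ℂ) (hrank : Ψ.rank = n) :
    Function.Injective Ψ.mulVec := by
  have hker : LinearMap.ker Ψ.mulVecLin = ⊥ := by
    have h1 := LinearMap.finrank_range_add_finrank_ker Ψ.mulVecLin
    rw [Matrix.rank] at hrank
    have h2 : Module.finrank ℂ (Fin n → ℂ) = n := Module.finrank_fin_fun ℂ
    have h0 : Module.finrank ℂ (LinearMap.ker Ψ.mulVecLin) = 0 := by omega
    exact Submodule.finrank_eq_zero.mp h0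
  have := LinearMap.ker_eq_bot.mp hker
  exact this

open scoped ComplexOrder in
lemma lawson_posdef_aux {m n : ℕ} (Ψ : Matrix (Fin m) (Fin n) ℂ) (hrank : Ψ.rank = n)
    (w : Fin m → ℝ) (hw : ∀ j, 0 < w j) :
    (Ψ.conjTranspose * Matrix.diagonal (fun j => (w j : ℂ)) * Ψ).PosDef := by
  have hW : (Matrix.diagonal (fun j => (w j : ℂ))).PosDef :=
    Matrix.PosDef.diagonal fun j => by exact_mod_cast hw j
  have hinj := lawson_mulVec_inj_of_rank Ψ hrank
  refine Matrix.PosDef.of_dotProduct_mulVec_pos ?_ ?_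
  · exact Matrix.isHermitian_conjTranspose_mul_mul Ψ hW.isHermitian
  · intro x hx
    have hy : Ψ.mulVec x ≠ 0 := fun h => hx (hinj (h.trans (Matrix.mulVec_zero Ψ).symm))
    have := hW.dotProduct_mulVec_pos hy
    simpa only [Matrix.star_mulVec, Matrix.dotProduct_mulVec, Matrix.vecMul_vecMul] using this

/-- Stagnation of Lawson's iteration with exponent 2: if the updated weights
`w'_j = w_j |r_j(w)|² / d(w)` yield a dual value equal to `d(w)` at a minimizer `a'`,
then `conj(r_j(w)) · r'_j` is constant over `j`, where `r'_j = f_j − (Ψ a')_j`. -/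
theorem lawson_stagnation
    (m n : ℕ) (hn : 0 < n) (hnm : n ≤ m)
    (f : Fin m → ℂ) (Ψ : Matrix (Fin m) (Fin n) ℂ) (hrank : Ψ.rank = n)
    (w : Fin m → ℝ) (hw : ∀ j, 0 < w j) (hw1 : ∑ j, w j = 1)
    (hd : 0 < lsDual m n f Ψ w)
    (a' : Fin n → ℂ)
    (ha' : ∀ a : Fin n → ℂ,
      (∑ j, (w j * ‖lsResidual m n f Ψ w j‖ ^ 2 / lsDual m n f Ψ w)
          * ‖f j - Ψ.mulVec a' j‖ ^ 2)
        ≤ ∑ j, (w j * ‖lsResidual m n f Ψ w j‖ ^ 2 / lsDual m n f Ψ w)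
          * ‖f j - Ψ.mulVec a j‖ ^ 2)
    (hstag : (∑ j, (w j * ‖lsResidual m n f Ψ w j‖ ^ 2 / lsDual m n f Ψ w)
          * ‖f j - Ψ.mulVec a' j‖ ^ 2) = lsDual m n f Ψ w) :
    ∃ c : ℂ, ∀ j,
      (starRingEnd ℂ) (lsResidual m n f Ψ w j) * (f j - Ψ.mulVec a' j) = c := by
  classical
  set W : Matrix (Fin m) (Fin m) ℂ := Matrix.diagonal (fun j => (w j : ℂ)) with hWdef
  set M : Matrix (Fin n) (Fin n) ℂ := Ψ.conjTranspose * W * Ψ with hMdef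
  set g : Fin n → ℂ := (Ψ.conjTranspose * W).mulVec f with hgdef
  set a₀ : Fin n → ℂ := M⁻¹.mulVec g with ha₀def
  set r : Fin m → ℂ := f - Ψ.mulVec a₀ with hrdef
  have hr : lsResidual m n f Ψ w = r := rfl
  set d : ℝ := lsDual m n f Ψ w with hddef
  have hdval : d = ∑ j, w j * Complex.normSq (r j) := by
    simp only [hddef, lsDual, hr, Complex.sq_norm]
  have hMpd := lawson_posdef_aux Ψ hrank w hw
  have hdet : IsUnit M.det := (Matrix.isUnit_iff_isUnit_det M).mp (by open scoped ComplexOrder in exact hMpd.isUnit)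
  have hMinv : M * M⁻¹ = 1 := Matrix.mul_nonsing_inv M hdet
  have hnormal : (Ψ.conjTranspose * W).mulVec r = 0 := by
    have h1 : (Ψ.conjTranspose * W).mulVec (Ψ.mulVec a₀) = g := by
      rw [Matrix.mulVec_mulVec, ha₀def, Matrix.mulVec_mulVec, ← hMdef, hMinv,
        Matrix.one_mulVec]
    rw [hrdef, Matrix.mulVec_sub, h1, hgdef, sub_self]
  have key : ∀ i, ∑ j, (starRingEnd ℂ) (Ψ j i) * ((w j : ℂ) * r j) = 0 := by
    intro i
    have := congrFun hnormal i
    simpa [hWdef, Matrix.mulVec, dotProduct, Matrix.mul_diagonal,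
      Matrix.conjTranspose_apply, mul_assoc] using this
  have orth : ∀ v : Fin n → ℂ, ∑ j, (w j : ℂ) * (starRingEnd ℂ) (r j) * Ψ.mulVec v j = 0 := by
    intro v
    have keyc : ∀ i, ∑ j, Ψ j i * ((w j : ℂ) * (starRingEnd ℂ) (r j)) = 0 := by
      intro i
      have := congrArg (starRingEnd ℂ) (key i)
      simpa [map_sum, mul_comm, mul_left_comm] using this
    calc ∑ j, (w j : ℂ) * (starRingEnd ℂ) (r j) * Ψ.mulVec v j
        = ∑ j, ∑ i, (Ψ j i * ((w j : ℂ) * (starRingEnd ℂ) (r j))) * v i := by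
          simp only [Matrix.mulVec, dotProduct, Finset.mul_sum]
          exact Finset.sum_congr rfl fun j _ => Finset.sum_congr rfl fun i _ => by ring
      _ = ∑ i, (∑ j, Ψ j i * ((w j : ℂ) * (starRingEnd ℂ) (r j))) * v i := by
          rw [Finset.sum_comm]; simp [Finset.sum_mul]
      _ = 0 := by simp [keyc]
  -- the "inner product" identity S = d
  have hS : ∑ j, (w j : ℂ) * ((starRingEnd ℂ) (r j) * (f j - Ψ.mulVec a' j)) = (d : ℂ) := by
    have hsplit : ∀ j, f j - Ψ.mulVec a' j = r j + Ψ.mulVec (a₀ - a') j := by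
      intro j
      simp only [hrdef, Pi.sub_apply, Matrix.mulVec_sub]
      ring
    calc ∑ j, (w j : ℂ) * ((starRingEnd ℂ) (r j) * (f j - Ψ.mulVec a' j))
        = ∑ j, ((w j : ℂ) * ((starRingEnd ℂ) (r j) * r j)
            + (w j : ℂ) * (starRingEnd ℂ) (r j) * Ψ.mulVec (a₀ - a') j) := by
          refine Finset.sum_congr rfl fun j _ => ?_
          rw [hsplit j]; ring
      _ = (∑ j, (w j : ℂ) * ((starRingEnd ℂ) (r j) * r j))
            + ∑ j, (w j : ℂ) * (starRingEnd ℂ) (r j) * Ψ.mulVec (a₀ - a') j :=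
          Finset.sum_add_distrib
      _ = ∑ j, (w j : ℂ) * ((starRingEnd ℂ) (r j) * r j) := by rw [orth (a₀ - a'), add_zero]
      _ = (d : ℂ) := by
          rw [hdval]
          push_cast
          refine Finset.sum_congr rfl fun j _ => ?_
          rw [Complex.normSq_eq_conj_mul_self]
  -- the second moment identity T = d²
  have hT : ∑ j, w j * Complex.normSq (r j) * Complex.normSq (f j - Ψ.mulVec a' j) = d ^ 2 := by
    have h1 : ∑ j, (w j * ‖r j‖ ^ 2 / d) * ‖f j - Ψ.mulVec a' j‖ ^ 2
        = (∑ j, w j * ‖r j‖ ^ 2 * ‖f j - Ψ.mulVec a' j‖ ^ 2) / d := by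
      rw [Finset.sum_div]
      exact Finset.sum_congr rfl fun j _ => div_mul_eq_mul_div _ _ _
    have h2 := hstag
    rw [hr, h1, div_eq_iff hd.ne'] at h2
    calc ∑ j, w j * Complex.normSq (r j) * Complex.normSq (f j - Ψ.mulVec a' j)
        = ∑ j, w j * ‖r j‖ ^ 2 * ‖f j - Ψ.mulVec a' j‖ ^ 2 := by
          simp [Complex.sq_norm]
      _ = d * d := h2
      _ = d ^ 2 := (sq d).symm
  -- the vanishing sum
  have hnormsq : ∀ z : ℂ, Complex.normSq (z - (d : ℂ))
      = Complex.normSq z - 2 * d * z.re + d ^ 2 := by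
    intro z
    simp [Complex.normSq_apply, Complex.sub_re, Complex.sub_im, Complex.ofReal_re,
      Complex.ofReal_im]
    ring
  have hre : ∑ j, w j * ((starRingEnd ℂ) (r j) * (f j - Ψ.mulVec a' j)).re = d := by
    have := congrArg Complex.re hS
    simpa [Complex.re_sum, Complex.re_ofReal_mul] using this
  have hzero : ∑ j, w j * Complex.normSq ((starRingEnd ℂ) (r j) * (f j - Ψ.mulVec a' j) - (d : ℂ))
      = 0 := by
    have hexp : ∀ j, w j * Complex.normSq ((starRingEnd ℂ) (r j) * (f j - Ψ.mulVec a' j) - (d : ℂ))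
        = w j * Complex.normSq (r j) * Complex.normSq (f j - Ψ.mulVec a' j)
          - 2 * d * (w j * ((starRingEnd ℂ) (r j) * (f j - Ψ.mulVec a' j)).re)
          + d ^ 2 * w j := by
      intro j
      rw [hnormsq, Complex.normSq_mul, Complex.normSq_conj]
      ring
    calc ∑ j, w j * Complex.normSq ((starRingEnd ℂ) (r j) * (f j - Ψ.mulVec a' j) - (d : ℂ))
        = (∑ j, w j * Complex.normSq (r j) * Complex.normSq (f j - Ψ.mulVec a' j))
          - 2 * d * (∑ j, w j * ((starRingEnd ℂ) (r j) * (f j - Ψ.mulVec a' j)).re)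
          + d ^ 2 * (∑ j, w j) := by
          simp only [hexp, Finset.sum_add_distrib, Finset.sum_sub_distrib, Finset.mul_sum]
      _ = d ^ 2 - 2 * d * d + d ^ 2 * 1 := by rw [hT, hre, hw1]
      _ = 0 := by ring
  refine ⟨(d : ℂ), fun j => ?_⟩
  have hterm : ∀ j ∈ Finset.univ, (0 : ℝ) ≤ w j
      * Complex.normSq ((starRingEnd ℂ) (r j) * (f j - Ψ.mulVec a' j) - (d : ℂ)) :=
    fun j _ => mul_nonneg (hw j).le (Complex.normSq_nonneg _)
  have hj := (Finset.sum_eq_zero_iff_of_nonneg hterm).mp hzero j (Finset.mem_univ j)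
  have hnz : Complex.normSq ((starRingEnd ℂ) (r j) * (f j - Ψ.mulVec a' j) - (d : ℂ)) = 0 := by
    rcases mul_eq_zero.mp hj with h | h
    · exact absurd h (hw j).ne'
    · exact h
  have := Complex.normSq_eq_zero.mp hnz
  rw [hr]
  exact sub_eq_zero.mp this
end
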